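/- arXiv:2109.10203 — 5 statements merged into one kernel-verified Lean document; each statement's English description precedes it below -/
import Mathlib

section
/- Let G be a finite connected modular graph. If (x1,x2,x3,x4) is an isometric rectangle in G, then d(x1,x2) = d(x3,x4) and d(x1,x4) = d(x2,x3). Moreover, for any vertex y1 ∈ I(x1,x4) there exists a vertex y2 ∈ I(x2,x3) such that (x1,x2,y2,y1) and (y1,y2,x3,x4) are isometric rectangles. -/
namespace ZeroExt

variable {V : Type*}

/-- The metric interval `I(x,y)` in a graph. -/
def interval (G : SimpleGraph V) (x y : V) : Set V :=
  {z | G.dist x z + G.dist z y = G.dist x y}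

/-- `m` is a median of `x, y, z`. -/
def IsMedian (G : SimpleGraph V) (x y z m : V) : Prop :=
  m ∈ interval G x y ∧ m ∈ interval G y z ∧ m ∈ interval G x z

/-- A graph is modular if every triple of vertices has a median. -/
def Modular (G : SimpleGraph V) : Prop :=
  ∀ x y z : V, ∃ m : V, IsMedian G x y z m

/-- `(a,b,c)` is a shortest subpath. -/
def ShortestTriple (G : SimpleGraph V) (a b c : V) : Prop :=
  G.dist a b + G.dist b c = G.dist a c

/-- `(a,b,c,d)` is a shortest subpath. -/
def ShortestQuad (G : SimpleGraph V) (a b c d : V) : Prop :=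
  G.dist a b + G.dist b c + G.dist c d = G.dist a d

/-- `(x1,x2,x3,x4)` is an isometric rectangle. -/
def IsoRect (G : SimpleGraph V) (x1 x2 x3 x4 : V) : Prop :=
  ShortestTriple G x4 x1 x2 ∧ ShortestTriple G x1 x2 x3 ∧
    ShortestTriple G x2 x3 x4 ∧ ShortestTriple G x3 x4 x1

/-- A set of vertices is convex if it contains the interval of each pair of its points. -/
def Convex (G : SimpleGraph V) (U : Set V) : Prop :=
  ∀ x ∈ U, ∀ y ∈ U, interval G x y ⊆ U

/-- `g` is a gate of `q` at `U`. -/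
def IsGate (G : SimpleGraph V) (U : Set V) (q g : V) : Prop :=
  g ∈ U ∧ ∀ u ∈ U, G.dist q u = G.dist q g + G.dist g u

/-- A 4-cycle in a graph. -/
def IsFourCycle (G : SimpleGraph V) (x1 x2 x3 x4 : V) : Prop :=
  G.Adj x1 x2 ∧ G.Adj x2 x3 ∧ G.Adj x3 x4 ∧ G.Adj x4 x1 ∧ x1 ≠ x3 ∧ x2 ≠ x4

/-- A modular complex: a finite connected modular graph together with an
acyclic admissible edge orientation. -/
structure ModularComplex (V : Type*) [Fintype V] where
  G : SimpleGraph V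
  connected : G.Connected
  modular : Modular G
  ori : V → V → Prop
  ori_adj : ∀ {x y : V}, ori x y → G.Adj x y
  ori_total : ∀ {x y : V}, G.Adj x y → ori x y ∨ ori y x
  acyclic : ∀ {x y : V}, Relation.ReflTransGen ori x y → Relation.ReflTransGen ori y x → x = y
  admissible : ∀ {x1 x2 x3 x4 : V}, IsFourCycle G x1 x2 x3 x4 → ori x1 x2 → ori x4 x3

variable [Fintype V]

/-- The partial order `⪯` induced by the orientation. -/
def ModularComplex.le (Γ : ModularComplex V) : V → V → Prop :=
  Relation.ReflTransGen Γ.ori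

/-- The order interval `[p,q]`. -/
def ModularComplex.Icc (Γ : ModularComplex V) (p q : V) : Set V :=
  {x | Γ.le p x ∧ Γ.le x q}

/-- `m` is the greatest lower bound `p ∧ q`. -/
def ModularComplex.IsMeet (Γ : ModularComplex V) (p q m : V) : Prop :=
  Γ.le m p ∧ Γ.le m q ∧ ∀ x : V, Γ.le x p → Γ.le x q → Γ.le x m

/-- `j` is the least upper bound `p ∨ q`. -/
def ModularComplex.IsJoin (Γ : ModularComplex V) (p q j : V) : Prop :=
  Γ.le p j ∧ Γ.le q j ∧ ∀ x : V, Γ.le p x → Γ.le q x → Γ.le j x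

/-- `(p,q)` is a Boolean pair. -/
def ModularComplex.BooleanPair (Γ : ModularComplex V) (p q : V) : Prop :=
  ∃ (k : ℕ) (φ : Finset (Fin k) → V), Function.Injective φ ∧
    φ ∅ = p ∧ φ Finset.univ = q ∧
    ∀ (S : Finset (Fin k)) (i : Fin k), i ∉ S → Γ.ori (φ S) (φ (insert i S))

/-- An extended modular complex: a modular complex with an admissible relation `⊑`. -/
structure ExtendedModularComplex (V : Type*) [Fintype V] extends ModularComplex V where
  sq : V → V → Prop
  sq_le : ∀ {p q : V}, sq p q → toModularComplex.le p q
  sq_refl : ∀ p : V, sq p p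
  sq_edge : ∀ {p q : V}, ori p q → sq p q
  sq_interval : ∀ {p q a b : V}, sq p q → toModularComplex.le a b →
    a ∈ toModularComplex.Icc p q → b ∈ toModularComplex.Icc p q → sq a b
  sq_join : ∀ {p q1 q2 j : V}, sq p q1 → sq p q2 → toModularComplex.IsJoin q1 q2 j → sq p j
  sq_meet : ∀ {p1 p2 q m : V}, sq p1 q → sq p2 q → toModularComplex.IsMeet p1 p2 m → sq m q

/-- `L^+_p = {x : p ⊑ x}`. -/
def ExtendedModularComplex.Lpos (Γ : ExtendedModularComplex V) (p : V) : Set V :=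
  {x | Γ.sq p x}

/-- `L^-_p = {x : x ⊑ p}`. -/
def ExtendedModularComplex.Lneg (Γ : ExtendedModularComplex V) (p : V) : Set V :=
  {x | Γ.sq x p}

/-- `p, q` are ◇-neighbors. -/
def ExtendedModularComplex.DiamondNb (Γ : ExtendedModularComplex V) (p q : V) : Prop :=
  ∃ a b : V, Γ.sq a b ∧ p ∈ Γ.Icc a b ∧ q ∈ Γ.Icc a b

/-- The thickening `Δ(Γ)`. -/
def ExtendedModularComplex.thick (Γ : ExtendedModularComplex V) : SimpleGraph V where
  Adj p q := p ≠ q ∧ Γ.DiamondNb p q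
  symm := by
    constructor
    rintro p q ⟨hne, a, b, hab, hp, hq⟩
    exact ⟨hne.symm, a, b, hab, hq, hp⟩
  loopless := by constructor; rintro p ⟨hne, -⟩; exact hne rfl


set_option maxHeartbeats 1600000 in
/-- In a finite connected modular graph, an isometric rectangle has equal
opposite sides, and every point of `I(x1,x4)` projects to a point of `I(x2,x3)` forming
two isometric rectangles. -/
theorem isoRect_sides_eq_and_split {V : Type*} [Fintype V] (G : SimpleGraph V)
    (hconn : G.Connected) (hmod : Modular G) (x1 x2 x3 x4 : V)
    (hrect : IsoRect G x1 x2 x3 x4) :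
    G.dist x1 x2 = G.dist x3 x4 ∧ G.dist x1 x4 = G.dist x2 x3 ∧
    ∀ y1 ∈ interval G x1 x4, ∃ y2 ∈ interval G x2 x3,
      IsoRect G x1 x2 y2 y1 ∧ IsoRect G y1 y2 x3 x4 := by
  obtain ⟨h1, h2, h3, h4⟩ := hrect
  simp only [ShortestTriple] at h1 h2 h3 h4
  have hc41 : G.dist x4 x1 = G.dist x1 x4 := G.dist_comm
  have hc34' : G.dist x3 x1 = G.dist x1 x3 := G.dist_comm
  -- h1 : d14 + d12 = d42 ; h2 : d12 + d23 = d13 ; h3 : d23 + d34 = d24 ; h4 : d43... careful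
  have hc24 : G.dist x2 x4 = G.dist x4 x2 := G.dist_comm
  have hc13 : G.dist x1 x3 = G.dist x3 x1 := G.dist_comm
  have hac : G.dist x1 x2 = G.dist x3 x4 := by omega
  have hbe : G.dist x1 x4 = G.dist x2 x3 := by omega
  refine ⟨hac, hbe, fun y1 hy1 => ?_⟩
  have hy1' : G.dist x1 y1 + G.dist y1 x4 = G.dist x1 x4 := hy1
  obtain ⟨y2, hm1, hm2, hm3⟩ := hmod x2 x3 y1
  have hm1' : G.dist x2 y2 + G.dist y2 x3 = G.dist x2 x3 := hm1
  have hm2' : G.dist x3 y2 + G.dist y2 y1 = G.dist x3 y1 := hm2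
  have hm3' : G.dist x2 y2 + G.dist y2 y1 = G.dist x2 y1 := hm3
  -- triangle inequalities
  have t1 : G.dist x4 x2 ≤ G.dist x4 y1 + G.dist y1 x2 := hconn.dist_triangle
  have t2 : G.dist x1 x3 ≤ G.dist x1 y1 + G.dist y1 x3 := hconn.dist_triangle
  have t3 : G.dist y1 x2 ≤ G.dist y1 x1 + G.dist x1 x2 := hconn.dist_triangle
  have t4 : G.dist y1 x3 ≤ G.dist y1 x4 + G.dist x4 x3 := hconn.dist_triangle
  have t5 : G.dist x1 y2 ≤ G.dist x1 y1 + G.dist y1 y2 := hconn.dist_triangle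
  have t6 : G.dist x1 x3 ≤ G.dist x1 y2 + G.dist y2 x3 := hconn.dist_triangle
  have t7 : G.dist x4 y2 ≤ G.dist x4 y1 + G.dist y1 y2 := hconn.dist_triangle
  have t8 : G.dist x4 x2 ≤ G.dist x4 y2 + G.dist y2 x2 := hconn.dist_triangle
  -- commutativity normalizations
  have c1 : G.dist y1 x1 = G.dist x1 y1 := G.dist_comm
  have c2 : G.dist y1 x4 = G.dist x4 y1 := G.dist_comm
  have c3 : G.dist y1 x2 = G.dist x2 y1 := G.dist_comm
  have c4 : G.dist y1 x3 = G.dist x3 y1 := G.dist_comm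
  have c5 : G.dist x4 x3 = G.dist x3 x4 := G.dist_comm
  have c6 : G.dist y1 y2 = G.dist y2 y1 := G.dist_comm
  have c7 : G.dist y2 x3 = G.dist x3 y2 := G.dist_comm
  have c8 : G.dist y2 x2 = G.dist x2 y2 := G.dist_comm
  have c9 : G.dist x1 y2 = G.dist y2 x1 := G.dist_comm
  have c10 : G.dist x4 y2 = G.dist y2 x4 := G.dist_comm
  have c11 : G.dist x2 x4 = G.dist x4 x2 := hc24
  -- pinned distances
  have d1 : G.dist x2 y1 = G.dist x1 y1 + G.dist x1 x2 := by omega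
  have d2 : G.dist x3 y1 = G.dist y1 x4 + G.dist x3 x4 := by omega
  have d3 : G.dist y2 y1 = G.dist x1 x2 := by omega
  have d4 : G.dist x2 y2 = G.dist x1 y1 := by omega
  have d5 : G.dist x3 y2 = G.dist y1 x4 := by omega
  have d6 : G.dist x1 y2 = G.dist x1 x2 + G.dist x1 y1 := by omega
  have d7 : G.dist x4 y2 = G.dist y1 x4 + G.dist x1 x2 := by omega
  have s1 : ShortestTriple G y1 x1 x2 := by
    clear hconn hmod h1 h2 h3 h4 t1 t2 t3 t4 t5 t6 t7 t8 hy1 hy1' hm1 hm2 hm3 hm1' hm2' hm3' hc24 hc13 hc41 hc34'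
    unfold ShortestTriple; omega
  have s2 : ShortestTriple G x1 x2 y2 := by
    clear hconn hmod h1 h2 h3 h4 t1 t2 t3 t4 t5 t6 t7 t8 hy1 hy1' hm1 hm2 hm3 hm1' hm2' hm3' hc24 hc13 hc41 hc34'
    unfold ShortestTriple; omega
  have s3 : ShortestTriple G x2 y2 y1 := by
    clear hconn hmod h1 h2 h3 h4 t1 t2 t3 t4 t5 t6 t7 t8 hy1 hy1' hm1 hm2 hm3 hm1' hm2' hm3' hc24 hc13 hc41 hc34'
    unfold ShortestTriple; omega
  have s4 : ShortestTriple G y2 y1 x1 := by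
    clear hconn hmod h1 h2 h3 h4 t1 t2 t3 t4 t5 t6 t7 t8 hy1 hy1' hm1 hm2 hm3 hm1' hm2' hm3' hc24 hc13 hc41 hc34'
    unfold ShortestTriple; omega
  have s5 : ShortestTriple G x4 y1 y2 := by
    clear hconn hmod h1 h2 h3 h4 t1 t2 t3 t4 t5 t6 t7 t8 hy1 hy1' hm1 hm2 hm3 hm1' hm2' hm3' hc24 hc13 hc41 hc34'
    unfold ShortestTriple; omega
  have s6 : ShortestTriple G y1 y2 x3 := by
    clear hconn hmod h1 h2 h3 h4 t1 t2 t3 t4 t5 t6 t7 t8 hy1 hy1' hm1 hm2 hm3 hm1' hm2' hm3' hc24 hc13 hc41 hc34'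
    unfold ShortestTriple; omega
  have s7 : ShortestTriple G y2 x3 x4 := by
    clear hconn hmod h1 h2 h3 h4 t1 t2 t3 t4 t5 t6 t7 t8 hy1 hy1' hm1 hm2 hm3 hm1' hm2' hm3' hc24 hc13 hc41 hc34'
    unfold ShortestTriple; omega
  have s8 : ShortestTriple G x3 x4 y1 := by
    clear hconn hmod h1 h2 h3 h4 t1 t2 t3 t4 t5 t6 t7 t8 hy1 hy1' hm1 hm2 hm3 hm1' hm2' hm3' hc24 hc13 hc41 hc34'
    unfold ShortestTriple; omega
  exact ⟨y2, hm1, ⟨s1, s2, s3, s4⟩, ⟨s5, s6, s7, s8⟩⟩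


end ZeroExt
end

section
/- Let Γ be a modular complex and let ⊑^Bp be the Boolean-pair relation on its vertices (p ⊑^Bp q iff (p,q) is a Boolean pair). Then ⊑^Bp is admissible for Γ, i.e.: p ⊑^Bp q implies p ⪯ q; p ⊑^Bp p for every vertex p; p ⊑^Bp q for every edge p→q; if p ⊑^Bp q, a ⪯ b and a,b ∈ [p,q], then a ⊑^Bp b; if p ⊑^Bp q1, p ⊑^Bp q2 and q1∨q2 exists, then p ⊑^Bp q1∨q2; and if p1 ⊑^Bp q, p2 ⊑^Bp q and p1∧p2 exists, then p1∧p2 ⊑^Bp q. -/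
namespace ZeroExt

variable {V : Type*}

variable [Fintype V]

/-! ### Auxiliary development -/

section Aux

open SimpleGraph Relation

variable {V : Type*} [Fintype V] (Γ : ModularComplex V)

namespace ModularComplex

lemma dz {x y : V} (h : Γ.G.dist x y = 0) : x = y :=
  (Γ.connected.dist_eq_zero_iff).mp h

lemma dtri (x y z : V) : Γ.G.dist x z ≤ Γ.G.dist x y + Γ.G.dist y z :=
  Γ.connected.dist_triangle

lemma adj_dist {x y : V} (h : Γ.G.Adj x y) : Γ.G.dist x y = 1 :=
  SimpleGraph.dist_eq_one_iff_adj.mpr h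

lemma dist_adj {x y : V} (h : Γ.G.dist x y = 1) : Γ.G.Adj x y :=
  SimpleGraph.dist_eq_one_iff_adj.mp h

lemma median (x y z : V) : ∃ m, Γ.G.dist x m + Γ.G.dist m y = Γ.G.dist x y ∧
    Γ.G.dist y m + Γ.G.dist m z = Γ.G.dist y z ∧
    Γ.G.dist x m + Γ.G.dist m z = Γ.G.dist x z := by
  obtain ⟨m, h1, h2, h3⟩ := Γ.modular x y z
  exact ⟨m, h1, h2, h3⟩

lemma no_triangle {a b c : V} (hab : Γ.G.Adj a b) (hbc : Γ.G.Adj b c)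
    (hca : Γ.G.Adj c a) : False := by
  obtain ⟨m, h1, h2, h3⟩ := Γ.median a b c
  rw [Γ.adj_dist hab] at h1
  rw [Γ.adj_dist hbc] at h2
  rw [Γ.adj_dist hca.symm] at h3
  rw [SimpleGraph.dist_comm (u := b) (v := m)] at h2
  omega

lemma nbr_ne {x u v : V} (h : Γ.G.Adj u v) : Γ.G.dist x u ≠ Γ.G.dist x v := by
  obtain ⟨m, h1, h2, h3⟩ := Γ.median x u v
  rw [Γ.adj_dist h] at h2
  intro he
  rw [SimpleGraph.dist_comm (u := u) (v := m)] at h2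
  have hc : Γ.G.dist m u = 0 ∨ Γ.G.dist m v = 0 := by omega
  rcases hc with hc | hc
  · have := Γ.dz hc; subst this
    -- m = u ; h3 : d x u + d u v = d x v
    rw [Γ.adj_dist h] at *
    omega
  · have := Γ.dz hc; subst this
    -- m = v ; h1 : d x v + d v u = d x u
    rw [Γ.adj_dist h.symm] at h1
    omega

lemma nbr {x u v : V} (h : Γ.G.Adj u v) :
    Γ.G.dist x v = Γ.G.dist x u + 1 ∨ Γ.G.dist x v + 1 = Γ.G.dist x u := by
  have h1 := Γ.dtri x u v
  have h2 := Γ.dtri x v u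
  rw [Γ.adj_dist h] at h1
  rw [Γ.adj_dist h.symm] at h2
  have h3 := Γ.nbr_ne (x := x) h
  omega

lemma quad {w v y z : V} (hvy : Γ.G.Adj v y) (hvz : Γ.G.Adj v z) (hyz : y ≠ z)
    (hy : Γ.G.dist w y + 1 = Γ.G.dist w v) (hz : Γ.G.dist w z + 1 = Γ.G.dist w v) :
    ∃ u, Γ.G.Adj u y ∧ Γ.G.Adj u z ∧ Γ.G.dist w u + 2 = Γ.G.dist w v := by
  have hyz2 : Γ.G.dist y z = 2 := by
    have hle := Γ.dtri y v z
    rw [Γ.adj_dist hvy.symm, Γ.adj_dist hvz] at hle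
    have h0 : Γ.G.dist y z ≠ 0 := fun hh => hyz (Γ.dz hh)
    have h1 : Γ.G.dist y z ≠ 1 := by
      intro hh
      exact Γ.no_triangle (Γ.dist_adj hh) hvz.symm hvy
    omega
  obtain ⟨m, h1, h2, h3⟩ := Γ.median w y z
  rw [hyz2] at h2
  have hmy : Γ.G.dist m y = 1 := by
    rw [SimpleGraph.dist_comm (u := y) (v := m)] at h2
    have h0 : Γ.G.dist m y ≠ 0 := by
      intro hh
      have := (Γ.dz hh); subst this
      -- m = y : h3 : d w y + d y z = d w z
      omega
    have h0' : Γ.G.dist m z ≠ 0 := by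
      intro hh
      have := (Γ.dz hh); subst this
      omega
    omega
  have hmz : Γ.G.dist m z = 1 := by
    rw [SimpleGraph.dist_comm (u := y) (v := m)] at h2
    omega
  refine ⟨m, Γ.dist_adj hmy, Γ.dist_adj hmz, by omega⟩

end ModularComplex

/-- Oriented chains of a given length. -/
inductive MCChain {V : Type*} [Fintype V] (Γ : ModularComplex V) : V → V → ℕ → Prop
  | refl (x : V) : MCChain Γ x x 0
  | step {x y z : V} {n : ℕ} : Γ.ori x y → MCChain Γ y z n → MCChain Γ x z (n + 1)

namespace ModularComplex

lemma chain_le {x z : V} {n : ℕ} (h : MCChain Γ x z n) : Γ.le x z := by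
  induction h with
  | refl => exact Relation.ReflTransGen.refl
  | step h1 _ ih => exact Relation.ReflTransGen.head h1 ih

lemma chain_snoc {x y : V} {n : ℕ} (h : MCChain Γ x y n) :
    ∀ {z : V}, Γ.ori y z → MCChain Γ x z (n + 1) := by
  induction h with
  | refl => exact fun hz => .step hz (.refl _)
  | step h1 _ ih => exact fun hz => .step h1 (ih hz)

lemma chain_trans {x y : V} {n : ℕ} (h : MCChain Γ x y n) :
    ∀ {z : V} {m : ℕ}, MCChain Γ y z m → MCChain Γ x z (n + m) := by
  induction h with
  | refl => intro z m hm; simpa using hm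
  | step h1 _ ih => intro z m hm; exact Nat.succ_add _ _ ▸ .step h1 (ih hm)

lemma le_chain {x z : V} (h : Γ.le x z) : ∃ n, MCChain Γ x z n := by
  induction h with
  | refl => exact ⟨0, .refl x⟩
  | tail _ h2 ih =>
    obtain ⟨n, hn⟩ := ih
    exact ⟨n + 1, Γ.chain_snoc hn h2⟩

lemma le_antisymm' {x y : V} (h1 : Γ.le x y) (h2 : Γ.le y x) : x = y :=
  Γ.acyclic h1 h2

lemma ori_ne {x y : V} (h : Γ.ori x y) : x ≠ y := (Γ.ori_adj h).ne

lemma ori_asymm {x y : V} (h1 : Γ.ori x y) (h2 : Γ.ori y x) : False :=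
  Γ.ori_ne h1 (Γ.acyclic (Relation.ReflTransGen.single h1) (Relation.ReflTransGen.single h2))

lemma chain_dist : ∀ n, ∀ x z : V, MCChain Γ x z n → Γ.G.dist x z = n := by
  intro n
  induction n using Nat.strong_induction_on with
  | _ n IH =>
    intro x z hc
    cases hc with
    | refl => exact SimpleGraph.dist_self
    | @step _ x1 _ m h1 hc1 =>
      have hd1 : Γ.G.dist x1 z = m := IH m (by omega) _ _ hc1
      have hadj : Γ.G.Adj x x1 := Γ.ori_adj h1
      have hub : Γ.G.dist x z ≤ m + 1 := by
        have := Γ.dtri x x1 z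
        rw [Γ.adj_dist hadj] at this
        omega
      have hnb := Γ.nbr (x := z) hadj
      rw [SimpleGraph.dist_comm (u := z) (v := x), SimpleGraph.dist_comm (u := z) (v := x1), hd1] at hnb
      rcases hnb with hnb | hnb
      · -- bad case : d x z + 1 = m
        exfalso
        cases hc1 with
        | refl => omega
        | @step _ x2 _ m' h2 hc2 =>
          by_cases hxz : x = z
          · subst hxz
            exact Γ.ori_ne h1
              (Γ.acyclic (Relation.ReflTransGen.single h1) (Γ.chain_le (MCChain.step h2 hc2)))
          · have hm' : Γ.G.dist x2 z = m' := IH m' (by omega) _ _ hc2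
            have hxx2 : x ≠ x2 := by
              intro hh; subst hh
              exact Γ.ori_asymm h1 h2
            have hm1 : 1 ≤ m' := by
              by_contra hh
              have hz0 : m' = 0 := by omega
              subst hz0
              cases hc2 with
              | refl => exact hxz (Γ.dz (by omega))
            obtain ⟨u, huy, huz, hud⟩ := Γ.quad (w := z) (v := x1) (y := x) (z := x2)
              hadj.symm (Γ.ori_adj h2) hxx2
              (by rw [SimpleGraph.dist_comm (u := z) (v := x), SimpleGraph.dist_comm (u := z) (v := x1), hd1]; omega)
              (by rw [SimpleGraph.dist_comm (u := z) (v := x2), SimpleGraph.dist_comm (u := z) (v := x1), hd1, hm'])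
            rw [SimpleGraph.dist_comm (u := z) (v := x1), hd1,
              SimpleGraph.dist_comm (u := z) (v := u)] at hud
            have hcyc : IsFourCycle Γ.G x x1 x2 u := by
              refine ⟨hadj, Γ.ori_adj h2, huz.symm, huy, hxx2, ?_⟩
              intro hh; subst hh
              omega
            have hor : Γ.ori u x2 := Γ.admissible hcyc h1
            have : Γ.G.dist u z = m' + 1 := IH (m' + 1) (by omega) _ _ (.step hor hc2)
            omega
      · omega

lemma le_dist {x y z : V} (h1 : Γ.le x y) (h2 : Γ.le y z) :
    Γ.G.dist x z = Γ.G.dist x y + Γ.G.dist y z := by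
  obtain ⟨n, hn⟩ := Γ.le_chain h1
  obtain ⟨m, hm⟩ := Γ.le_chain h2
  rw [Γ.chain_dist _ _ _ hn, Γ.chain_dist _ _ _ hm, Γ.chain_dist _ _ _ (Γ.chain_trans hn hm)]

lemma ori_of {x y : V} (h : Γ.le x y) (hd : Γ.G.dist x y = 1) : Γ.ori x y := by
  obtain ⟨n, hn⟩ := Γ.le_chain h
  have := Γ.chain_dist _ _ _ hn
  rw [hd] at this; subst this
  cases hn with
  | step h1 hc =>
    cases hc with
    | refl => exact h1

lemma dist_of_ori {x y : V} (h : Γ.ori x y) : Γ.G.dist x y = 1 := Γ.adj_dist (Γ.ori_adj h)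

lemma eq_of_le_dist {x y : V} (h : Γ.le x y) (hd : Γ.G.dist x y = 0) : x = y := Γ.dz hd

lemma eq_of_le_rank {b x y : V} (hbx : Γ.le b x) (hxy : Γ.le x y)
    (hr : Γ.G.dist b x = Γ.G.dist b y) : x = y := by
  have := Γ.le_dist hbx hxy
  exact Γ.dz (by omega)


lemma desc : ∀ n : ℕ, ∀ b w z : V, Γ.le b w → Γ.G.dist b w = n → Γ.G.Adj b z →
    Γ.G.dist z w + 1 = n → Γ.ori b z ∧ Γ.le z w := by
  intro n
  induction n using Nat.strong_induction_on with
  | _ n IH =>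
    intro b w z hbw hd hadj hzw
    rcases Relation.ReflTransGen.cases_head hbw with heq | ⟨b1, hb1, hb1w⟩
    · exfalso; subst heq; rw [SimpleGraph.dist_self] at hd; omega
    · have hdb1 : Γ.G.dist b1 w + 1 = n := by
        have := Γ.le_dist (Relation.ReflTransGen.single hb1) hb1w
        rw [Γ.dist_of_ori hb1] at this
        omega
      by_cases hzb1 : z = b1
      · subst hzb1; exact ⟨hb1, hb1w⟩
      · -- n ≥ 2 needed
        have hn2 : 2 ≤ n := by
          by_contra hh
          have hn1 : n = 1 := by omega
          have hz0 : z = w := Γ.dz (by omega)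
          have hb10 : b1 = w := Γ.dz (by omega)
          exact hzb1 (hz0.trans hb10.symm)
        obtain ⟨u, huz, hub1, hud⟩ := Γ.quad (w := w) (v := b) (y := z) (z := b1)
          hadj (Γ.ori_adj hb1) hzb1
          (by rw [SimpleGraph.dist_comm (u := w) (v := z), SimpleGraph.dist_comm (u := w) (v := b)]; omega)
          (by rw [SimpleGraph.dist_comm (u := w) (v := b1), SimpleGraph.dist_comm (u := w) (v := b)]; omega)
        rw [SimpleGraph.dist_comm (u := w) (v := u), SimpleGraph.dist_comm (u := w) (v := b)] at hud
        obtain ⟨hb1u, huw⟩ := IH (n - 1) (by omega) b1 w u hb1w (by omega) hub1.symm (by omega)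
        have hbu : b ≠ u := by
          intro hh; subst hh; omega
        have hcyc1 : IsFourCycle Γ.G b1 u z b :=
          ⟨Γ.ori_adj hb1u, huz, hadj.symm, Γ.ori_adj hb1, Ne.symm hzb1, Ne.symm hbu⟩
        have horbz : Γ.ori b z := Γ.admissible hcyc1 hb1u
        have hcyc2 : IsFourCycle Γ.G b b1 u z :=
          ⟨Γ.ori_adj hb1, Γ.ori_adj hb1u, huz, hadj.symm, hbu, Ne.symm hzb1⟩
        have horzu : Γ.ori z u := Γ.admissible hcyc2 hb1
        exact ⟨horbz, Relation.ReflTransGen.head horzu huw⟩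

lemma upper_unique {x z u u' : V} (hne : x ≠ z) (h1 : Γ.ori x u) (h2 : Γ.ori z u)
    (h1' : Γ.ori x u') (h2' : Γ.ori z u') : u = u' := by
  by_contra h
  have hcyc : IsFourCycle Γ.G x u z u' :=
    ⟨Γ.ori_adj h1, (Γ.ori_adj h2).symm, Γ.ori_adj h2', (Γ.ori_adj h1').symm, hne, h⟩
  exact Γ.ori_asymm h2' (Γ.admissible hcyc h1)

lemma j2aux {c x z w : V} (hx : Γ.ori c x) (hz : Γ.ori c z) (hne : x ≠ z)
    (hxw : Γ.le x w) (hzw : Γ.le z w) :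
    ∃ u, Γ.ori x u ∧ Γ.ori z u ∧ Γ.le u w := by
  have hdx : Γ.G.dist c w = 1 + Γ.G.dist x w := by
    have := Γ.le_dist (Relation.ReflTransGen.single hx) hxw
    rw [Γ.dist_of_ori hx] at this; omega
  have hdz : Γ.G.dist c w = 1 + Γ.G.dist z w := by
    have := Γ.le_dist (Relation.ReflTransGen.single hz) hzw
    rw [Γ.dist_of_ori hz] at this; omega
  obtain ⟨u, hux, huz, hud⟩ := Γ.quad (w := w) (v := c) (y := x) (z := z)
    (Γ.ori_adj hx) (Γ.ori_adj hz) hne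
    (by rw [SimpleGraph.dist_comm (u := w) (v := x), SimpleGraph.dist_comm (u := w) (v := c)]; omega)
    (by rw [SimpleGraph.dist_comm (u := w) (v := z), SimpleGraph.dist_comm (u := w) (v := c)]; omega)
  rw [SimpleGraph.dist_comm (u := w) (v := u), SimpleGraph.dist_comm (u := w) (v := c)] at hud
  have hcu : c ≠ u := by intro hh; subst hh; omega
  have hcyc1 : IsFourCycle Γ.G c x u z :=
    ⟨Γ.ori_adj hx, hux.symm, huz, (Γ.ori_adj hz).symm, hcu, hne⟩
  have horzu : Γ.ori z u := Γ.admissible hcyc1 hx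
  have hcyc2 : IsFourCycle Γ.G c z u x :=
    ⟨Γ.ori_adj hz, huz.symm, hux, (Γ.ori_adj hx).symm, hcu, hne.symm⟩
  have horxu : Γ.ori x u := Γ.admissible hcyc2 hz
  have := (Γ.desc (Γ.G.dist x w) x w u hxw rfl (Γ.ori_adj horxu) (by omega)).2
  exact ⟨u, horxu, horzu, this⟩

lemma j2 {c x z w : V} (hx : Γ.ori c x) (hz : Γ.ori c z) (hne : x ≠ z)
    (hxw : Γ.le x w) (hzw : Γ.le z w) :
    ∃ u, Γ.ori x u ∧ Γ.ori z u ∧ Γ.IsJoin x z u := by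
  obtain ⟨u, h1, h2, h3⟩ := Γ.j2aux hx hz hne hxw hzw
  refine ⟨u, h1, h2, Relation.ReflTransGen.single h1, Relation.ReflTransGen.single h2, ?_⟩
  intro v hxv hzv
  obtain ⟨u', h1', h2', h3'⟩ := Γ.j2aux hx hz hne hxv hzv
  rwa [Γ.upper_unique hne h1 h2 h1' h2']

lemma join_unique {x y j j' : V} (h : Γ.IsJoin x y j) (h' : Γ.IsJoin x y j') : j = j' :=
  Γ.le_antisymm' (h.2.2 _ h'.1 h'.2.1) (h'.2.2 _ h.1 h.2.1)

lemma join_comm {x y j : V} (h : Γ.IsJoin x y j) : Γ.IsJoin y x j :=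
  ⟨h.2.1, h.1, fun v h1 h2 => h.2.2 v h2 h1⟩

lemma semi : ∀ n : ℕ, ∀ c x y w : V, Γ.ori c x → Γ.le c y → Γ.G.dist c y = n →
    Γ.le x w → Γ.le y w →
    ∃ j, Γ.IsJoin x y j ∧ (¬ Γ.le x y → Γ.ori y j) := by
  intro n
  induction n using Nat.strong_induction_on with
  | _ n IH =>
    intro c x y w hcx hcy hd hxw hyw
    rcases Relation.ReflTransGen.cases_head hcy with heq | ⟨z, hcz, hzy⟩
    · subst heq
      refine ⟨x, ⟨Relation.ReflTransGen.refl, Relation.ReflTransGen.single hcx,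
        fun v h1 _ => h1⟩, fun _ => hcx⟩
    · have hdz : Γ.G.dist z y + 1 = n := by
        have := Γ.le_dist (Relation.ReflTransGen.single hcz) hzy
        rw [Γ.dist_of_ori hcz] at this; omega
      by_cases hxz : x = z
      · subst hxz
        refine ⟨y, ⟨hzy, Relation.ReflTransGen.refl, fun v _ h2 => h2⟩, fun hn => absurd hzy hn⟩
      · obtain ⟨u, hxu, hzu, hju⟩ := Γ.j2 hcx hcz hxz hxw (hzy.trans hyw)
        obtain ⟨j, hj, hcov⟩ := IH (n - 1) (by omega) z u y w hzu hzy (by omega)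
          (hju.2.2 w hxw (hzy.trans hyw)) hyw
        refine ⟨j, ⟨(Relation.ReflTransGen.single hxu).trans hj.1, hj.2.1, ?_⟩, ?_⟩
        · intro v h1 h2
          exact hj.2.2 v (hju.2.2 v h1 (hzy.trans h2)) h2
        · intro hn
          refine hcov ?_
          intro hu
          exact hn ((Relation.ReflTransGen.single hxu).trans hu)

lemma chain_tail {x : V} : ∀ {n : ℕ} {b : V}, MCChain Γ b x (n + 1) →
    ∃ x1, MCChain Γ b x1 n ∧ Γ.ori x1 x := by
  intro n
  induction n with
  | zero =>
    intro b h
    cases h with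
    | step hab hbc => cases hbc with | refl => exact ⟨b, .refl b, hab⟩
  | succ n ih =>
    intro b h
    cases h with
    | step hab hbc =>
      obtain ⟨x1, h1, h2⟩ := ih hbc
      exact ⟨x1, .step hab h1, h2⟩

lemma join_exists_n : ∀ n : ℕ, ∀ b x y w : V, MCChain Γ b x n → Γ.le b y →
    Γ.le x w → Γ.le y w → ∃ j, Γ.IsJoin x y j := by
  intro n
  induction n using Nat.strong_induction_on with
  | _ n IH =>
    intro b x y w hn hby hxw hyw
    rcases n with _ | n
    · cases hn with
      | refl => exact ⟨y, hby, Relation.ReflTransGen.refl, fun v _ h2 => h2⟩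
    · obtain ⟨x1, h1, horx⟩ := Γ.chain_tail hn
      obtain ⟨j1, hj1⟩ := IH n (by omega) b x1 y w h1 hby
        ((Relation.ReflTransGen.single horx).trans hxw) hyw
      obtain ⟨j, hj, _⟩ := Γ.semi (Γ.G.dist x1 j1) x1 x j1 w horx hj1.1 rfl hxw
        (hj1.2.2 w ((Relation.ReflTransGen.single horx).trans hxw) hyw)
      refine ⟨j, hj.1, hj1.2.1.trans hj.2.1, ?_⟩
      intro v h1 h2
      exact hj.2.2 v h1 (hj1.2.2 v ((Relation.ReflTransGen.single horx).trans h1) h2)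

lemma join_exists {b x y w : V} (hbx : Γ.le b x) (hby : Γ.le b y)
    (hxw : Γ.le x w) (hyw : Γ.le y w) : ∃ j, Γ.IsJoin x y j := by
  obtain ⟨n, hn⟩ := Γ.le_chain hbx
  exact Γ.join_exists_n n b x y w hn hby hxw hyw


/-- The opposite modular complex, with reversed orientation. -/
def op : ModularComplex V where
  G := Γ.G
  connected := Γ.connected
  modular := Γ.modular
  ori := fun x y => Γ.ori y x
  ori_adj := fun h => (Γ.ori_adj h).symm
  ori_total := fun h => Γ.ori_total h.symm
  acyclic := by
    intro x y h h'
    have h1 : Relation.ReflTransGen Γ.ori y x := Relation.reflTransGen_swap.mp h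
    have h2 : Relation.ReflTransGen Γ.ori x y := Relation.reflTransGen_swap.mp h'
    exact Γ.acyclic h2 h1
  admissible := by
    intro x1 x2 x3 x4 hcyc h
    obtain ⟨a12, a23, a34, a41, h13, h24⟩ := hcyc
    exact Γ.admissible ⟨a12.symm, a41.symm, a34.symm, a23.symm, h24, h13⟩ h

lemma op_le {x y : V} : Γ.op.le x y ↔ Γ.le y x := Relation.reflTransGen_swap

lemma op_isJoin {x y j : V} : Γ.op.IsJoin x y j ↔ Γ.IsMeet x y j := by
  constructor
  · rintro ⟨a, b, c⟩
    exact ⟨Γ.op_le.mp a, Γ.op_le.mp b,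
      fun v h1 h2 => Γ.op_le.mp (c v (Γ.op_le.mpr h1) (Γ.op_le.mpr h2))⟩
  · rintro ⟨a, b, c⟩
    exact ⟨Γ.op_le.mpr a, Γ.op_le.mpr b,
      fun v h1 h2 => Γ.op_le.mpr (c v (Γ.op_le.mp h1) (Γ.op_le.mp h2))⟩

lemma op_isMeet {x y m : V} : Γ.op.IsMeet x y m ↔ Γ.IsJoin x y m := by
  constructor
  · rintro ⟨a, b, c⟩
    exact ⟨Γ.op_le.mp a, Γ.op_le.mp b,
      fun v h1 h2 => Γ.op_le.mp (c v (Γ.op_le.mpr h1) (Γ.op_le.mpr h2))⟩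
  · rintro ⟨a, b, c⟩
    exact ⟨Γ.op_le.mpr a, Γ.op_le.mpr b,
      fun v h1 h2 => Γ.op_le.mpr (c v (Γ.op_le.mp h1) (Γ.op_le.mp h2))⟩

lemma meet_exists {b x y w : V} (hbx : Γ.le b x) (hby : Γ.le b y)
    (hxw : Γ.le x w) (hyw : Γ.le y w) : ∃ m, Γ.IsMeet x y m := by
  obtain ⟨m, hm⟩ := Γ.op.join_exists (b := w) (x := x) (y := y) (w := b)
    (Γ.op_le.mpr hxw) (Γ.op_le.mpr hyw) (Γ.op_le.mpr hbx) (Γ.op_le.mpr hby)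
  exact ⟨m, Γ.op_isJoin.mp hm⟩

lemma meet_unique {x y m m' : V} (h : Γ.IsMeet x y m) (h' : Γ.IsMeet x y m') : m = m' :=
  Γ.le_antisymm' (h'.2.2 _ h.1 h.2.1) (h.2.2 _ h'.1 h'.2.1)

lemma sub : ∀ n : ℕ, ∀ m z x y w jz : V, Γ.le m z → Γ.le z x → Γ.G.dist m z = n →
    Γ.IsJoin z y jz → Γ.le m y → Γ.le x w → Γ.le y w → Γ.G.dist y jz ≤ n := by
  intro n
  induction n using Nat.strong_induction_on with
  | _ n IH =>
    intro m z x y w jz hmz hzx hd hjz hmy hxw hyw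
    rcases n with _ | n
    · have hzm : z = m := (Γ.eq_of_le_dist hmz hd).symm
      subst hzm
      have hy : jz = y := Γ.join_unique hjz ⟨hmy, Relation.ReflTransGen.refl, fun v _ h2 => h2⟩
      rw [hy, SimpleGraph.dist_self]
    · obtain ⟨nc, hnc⟩ := Γ.le_chain hmz
      have hncn : nc = n + 1 := by rw [← hd, Γ.chain_dist _ _ _ hnc]
      subst hncn
      obtain ⟨z1, hz1, horz⟩ := Γ.chain_tail hnc
      have hmz1 : Γ.le m z1 := Γ.chain_le hz1
      have hz1x : Γ.le z1 x := (Relation.ReflTransGen.single horz).trans hzx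
      obtain ⟨j1, hj1⟩ := Γ.join_exists (b := m) (w := w) hmz1 hmy (hz1x.trans hxw) hyw
      have hIH : Γ.G.dist y j1 ≤ n := IH n (by omega) m z1 x y w j1 hmz1 hz1x
        (Γ.chain_dist _ _ _ hz1) hj1 hmy hxw hyw
      obtain ⟨j', hj', hcov⟩ := Γ.semi (Γ.G.dist z1 j1) z1 z j1 w horz hj1.1 rfl
        (hzx.trans hxw) (hj1.2.2 w (hz1x.trans hxw) hyw)
      have hjoin : Γ.IsJoin z y j' :=
        ⟨hj'.1, hj1.2.1.trans hj'.2.1, fun v h1 h2 =>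
          hj'.2.2 v h1 (hj1.2.2 v ((Relation.ReflTransGen.single horz).trans h1) h2)⟩
      have hjj : jz = j' := Γ.join_unique hjz hjoin
      subst hjj
      have hd1 : Γ.G.dist y jz = Γ.G.dist y j1 + Γ.G.dist j1 jz :=
        Γ.le_dist hj1.2.1 hj'.2.1
      by_cases hle : Γ.le z j1
      · have : jz = j1 := Γ.join_unique hj' ⟨hle, Relation.ReflTransGen.refl, fun v _ h2 => h2⟩
        rw [this] at hd1 ⊢
        rw [SimpleGraph.dist_self] at hd1
        omega
      · have := Γ.dist_of_ori (hcov hle)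
        omega

lemma super {p x y m j : V} (hpx : Γ.le p x) (hpy : Γ.le p y)
    (hm : Γ.IsMeet x y m) (hj : Γ.IsJoin x y j) : Γ.G.dist y m ≤ Γ.G.dist j x := by
  have := Γ.op.sub (Γ.op.G.dist j x) j x x y p m
    (Γ.op_le.mpr hj.1) Relation.ReflTransGen.refl rfl
    (Γ.op_isJoin.mpr hm) (Γ.op_le.mpr hj.2.1) (Γ.op_le.mpr hpx) (Γ.op_le.mpr hpy)
  exact this


/-- A spanning cube. -/
def IsCube {k : ℕ} (φ : Finset (Fin k) → V) : Prop :=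
  Function.Injective φ ∧
    ∀ (S : Finset (Fin k)) (i : Fin k), i ∉ S → Γ.ori (φ S) (φ (insert i S))

/-- `j` is the least upper bound of `{p} ∪ A`. -/
def IsLubSet (p : V) (A : Set V) (j : V) : Prop :=
  Γ.le p j ∧ (∀ a ∈ A, Γ.le a j) ∧ ∀ v, Γ.le p v → (∀ a ∈ A, Γ.le a v) → Γ.le j v

lemma bp_iff {p q : V} : Γ.BooleanPair p q ↔ ∃ (k : ℕ) (φ : Finset (Fin k) → V),
    Γ.IsCube φ ∧ φ ∅ = p ∧ φ Finset.univ = q := by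
  constructor
  · rintro ⟨k, φ, h1, h2, h3, h4⟩; exact ⟨k, φ, ⟨h1, h4⟩, h2, h3⟩
  · rintro ⟨k, φ, ⟨h1, h4⟩, h2, h3⟩; exact ⟨k, φ, h1, h2, h3, h4⟩

section Cube

variable {k : ℕ} {φ : Finset (Fin k) → V}

lemma cube_mono (hc : Γ.IsCube φ) :
    ∀ (n : ℕ) (S T : Finset (Fin k)), (T \ S).card = n → S ⊆ T → Γ.le (φ S) (φ T) := by
  intro n
  induction n with
  | zero =>
    intro S T h hsub
    have hTS : T ⊆ S := Finset.sdiff_eq_empty_iff_subset.mp (Finset.card_eq_zero.mp h)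
    rw [Finset.Subset.antisymm hsub hTS]
    exact Relation.ReflTransGen.refl
  | succ n ih =>
    intro S T h hsub
    obtain ⟨i, hi⟩ := Finset.card_pos.mp (by omega : 0 < (T \ S).card)
    rw [Finset.mem_sdiff] at hi
    refine Relation.ReflTransGen.head (hc.2 S i hi.2) (ih (insert i S) T ?_ ?_)
    · rw [Finset.sdiff_insert, Finset.card_erase_of_mem (Finset.mem_sdiff.mpr hi), h]
      omega
    · exact Finset.insert_subset hi.1 hsub

lemma cube_mono' (hc : Γ.IsCube φ) {S T : Finset (Fin k)} (hsub : S ⊆ T) :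
    Γ.le (φ S) (φ T) :=
  Γ.cube_mono hc _ S T rfl hsub

lemma cube_rank (hc : Γ.IsCube φ) (S : Finset (Fin k)) :
    Γ.G.dist (φ ∅) (φ S) = S.card := by
  classical
  induction S using Finset.induction with
  | empty => simp [SimpleGraph.dist_self]
  | @insert i S hiS ih =>
    have hor := hc.2 S i hiS
    have hD := Γ.le_dist (Γ.cube_mono' hc (Finset.empty_subset S))
      (Relation.ReflTransGen.single hor)
    rw [Γ.dist_of_ori hor] at hD
    rw [hD, ih, Finset.card_insert_of_notMem hiS]

lemma cube_atom (hc : Γ.IsCube φ) (i : Fin k) : Γ.ori (φ ∅) (φ {i}) := by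
  simpa using hc.2 ∅ i (Finset.notMem_empty i)

lemma cube_emb (hc : Γ.IsCube φ) :
    ∀ (n : ℕ) (T : Finset (Fin k)) (i : Fin k), T.card = n →
      Γ.le (φ {i}) (φ T) → i ∈ T := by
  classical
  intro n
  induction n using Nat.strong_induction_on with
  | _ n IH =>
    intro T i hcard hle
    by_contra hiT
    rcases n with _ | n
    · -- T = ∅
      have hT : T = ∅ := Finset.card_eq_zero.mp hcard
      subst hT
      have heq : φ {i} = φ ∅ :=
        Γ.le_antisymm' hle (Γ.cube_mono' hc (Finset.empty_subset _))
      exact Finset.singleton_ne_empty i (hc.1 heq)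
    · obtain ⟨j, hj⟩ := Finset.card_pos.mp (by omega : 0 < T.card)
      set T' := T.erase j with hT'
      have hT'card : T'.card = n := by
        rw [hT', Finset.card_erase_of_mem hj, hcard]
        omega
      have hT'T : T' ⊆ T := Finset.erase_subset j T
      have hiT' : i ∉ T' := fun hh => hiT (hT'T hh)
      have hp1 : Γ.le (φ ∅) (φ {i}) := Γ.cube_mono' hc (Finset.empty_subset _)
      have hp2 : Γ.le (φ ∅) (φ T') := Γ.cube_mono' hc (Finset.empty_subset _)
      obtain ⟨g, hg⟩ := Γ.meet_exists (b := φ ∅) (w := φ T) hp1 hp2 hle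
        (Γ.cube_mono' hc hT'T)
      have hpg : Γ.le (φ ∅) g := hg.2.2 _ hp1 hp2
      have hrank1 : Γ.G.dist (φ ∅) (φ {i}) = 1 := by
        rw [Γ.cube_rank hc, Finset.card_singleton]
      have hD := Γ.le_dist hpg hg.1
      rw [hrank1] at hD
      have hcase : Γ.G.dist (φ ∅) g = 0 ∨ Γ.G.dist (φ ∅) g = 1 := by omega
      rcases hcase with h0 | h1
      · -- g = φ ∅ : the meet is the bottom
        have hgp : g = φ ∅ := (Γ.eq_of_le_dist hpg h0).symm
        have hnle : ¬ Γ.le (φ {i}) (φ T') := by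
          intro hle'
          have : φ {i} = g := Γ.meet_unique
            ⟨Relation.ReflTransGen.refl, hle', fun v hv _ => hv⟩ hg
          rw [this, hgp] at hrank1
          rw [SimpleGraph.dist_self] at hrank1
          omega
        obtain ⟨j0, hj0, hcov⟩ := Γ.semi (Γ.G.dist (φ ∅) (φ T')) (φ ∅) (φ {i}) (φ T') (φ T)
          (Γ.cube_atom hc i) hp2 rfl hle (Γ.cube_mono' hc hT'T)
        have horj0 : Γ.ori (φ T') j0 := hcov hnle
        have hpj0 : Γ.le (φ ∅) j0 := hp2.trans (Relation.ReflTransGen.single horj0)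
        have hrj0 : Γ.G.dist (φ ∅) j0 = n + 1 := by
          have := Γ.le_dist hp2 (Relation.ReflTransGen.single horj0)
          rw [Γ.dist_of_ori horj0, Γ.cube_rank hc, hT'card] at this
          omega
        have hj0T : Γ.le j0 (φ T) := hj0.2.2 _ hle (Γ.cube_mono' hc hT'T)
        -- the meet of φ T and φ (insert i T')
        have hsub1 : T ⊆ insert i T := Finset.subset_insert i T
        have hsub2 : insert i T' ⊆ insert i T := Finset.insert_subset_insert i hT'T
        obtain ⟨h2, hh2⟩ := Γ.meet_exists (b := φ ∅) (w := φ (insert i T))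
          (Γ.cube_mono' hc (Finset.empty_subset _)) (Γ.cube_mono' hc (Finset.empty_subset _))
          (Γ.cube_mono' hc hsub1) (Γ.cube_mono' hc hsub2)
        have hj0h2 : Γ.le j0 h2 := hh2.2.2 _ hj0T
          (hj0.2.2 _ (Γ.cube_mono' hc (by simp : ({i} : Finset (Fin k)) ⊆ insert i T'))
            (Γ.cube_mono' hc (Finset.subset_insert i T')))
        -- ranks force j0 = h2 = φ T
        have e1 := Γ.le_dist hpj0 hj0h2
        have e2 := Γ.le_dist (hpj0.trans hj0h2) hh2.1
        have hrT : Γ.G.dist (φ ∅) (φ T) = n + 1 := by rw [Γ.cube_rank hc, hcard]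
        have hj0eq : j0 = h2 := Γ.dz (by omega)
        have hh2eq : h2 = φ T := Γ.dz (by omega)
        have hTb' : Γ.le (φ T) (φ (insert i T')) := hh2eq ▸ hh2.2.1
        have hrb' : Γ.G.dist (φ ∅) (φ (insert i T')) = n + 1 := by
          rw [Γ.cube_rank hc, Finset.card_insert_of_notMem hiT', hT'card]
        have : φ T = φ (insert i T') := Γ.eq_of_le_rank
          (Γ.cube_mono' hc (Finset.empty_subset _)) hTb' (by omega)
        have hTeq : T = insert i T' := hc.1 this
        exact hiT (hTeq ▸ Finset.mem_insert_self i T')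
      · -- g = φ {i} : φ {i} ≤ φ T'
        have hgi : g = φ {i} := by
          have := Γ.le_dist hpg hg.1
          exact Γ.dz (by omega)
        have : Γ.le (φ {i}) (φ T') := hgi ▸ hg.2.1
        exact hiT (hT'T (IH n (by omega) T' i hT'card this))

lemma cube_emb' (hc : Γ.IsCube φ) {T : Finset (Fin k)} {i : Fin k}
    (h : Γ.le (φ {i}) (φ T)) : i ∈ T :=
  Γ.cube_emb hc T.card T i rfl h

lemma cube_join_atom (hc : Γ.IsCube φ) {S : Finset (Fin k)} {i : Fin k} (hiS : i ∉ S) :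
    Γ.IsJoin (φ S) (φ {i}) (φ (insert i S)) := by
  classical
  have hnle : ¬ Γ.le (φ {i}) (φ S) := fun hh => hiS (Γ.cube_emb' hc hh)
  obtain ⟨j0, hj0, hcov⟩ := Γ.semi (Γ.G.dist (φ ∅) (φ S)) (φ ∅) (φ {i}) (φ S) (φ (insert i S))
    (Γ.cube_atom hc i) (Γ.cube_mono' hc (Finset.empty_subset _)) rfl
    (Γ.cube_mono' hc (by simp))
    (Γ.cube_mono' hc (Finset.subset_insert i S))
  have horj0 : Γ.ori (φ S) j0 := hcov hnle
  have hrj0 : Γ.G.dist (φ ∅) j0 = S.card + 1 := by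
    have := Γ.le_dist (Γ.cube_mono' hc (Finset.empty_subset S))
      (Relation.ReflTransGen.single horj0)
    rw [Γ.dist_of_ori horj0, Γ.cube_rank hc] at this
    omega
  have hj0le : Γ.le j0 (φ (insert i S)) := hj0.2.2 _
    (Γ.cube_mono' hc (by simp)) (Γ.cube_mono' hc (Finset.subset_insert i S))
  have : j0 = φ (insert i S) := Γ.eq_of_le_rank
    (Γ.cube_mono' hc (Finset.empty_subset S) |>.trans (Relation.ReflTransGen.single horj0))
    hj0le
    (by rw [hrj0, Γ.cube_rank hc, Finset.card_insert_of_notMem hiS])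
  exact this ▸ Γ.join_comm hj0

lemma cube_join (hc : Γ.IsCube φ) (S T : Finset (Fin k)) :
    Γ.IsJoin (φ S) (φ T) (φ (S ∪ T)) := by
  classical
  induction T using Finset.induction with
  | empty =>
    rw [Finset.union_empty]
    exact ⟨Relation.ReflTransGen.refl, Γ.cube_mono' hc (Finset.empty_subset S),
      fun v h1 _ => h1⟩
  | @insert i T hiT ih =>
    rw [Finset.union_insert]
    by_cases hiST : i ∈ S ∪ T
    · rw [Finset.insert_eq_self.mpr hiST]
      refine ⟨ih.1, ?_, ?_⟩
      · exact Γ.cube_mono' hc (Finset.insert_subset hiST Finset.subset_union_right)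
      · intro v h1 h2
        exact ih.2.2 v h1 ((Γ.cube_mono' hc (Finset.subset_insert i T)).trans h2)
    · refine ⟨ih.1.trans (Γ.cube_mono' hc (Finset.subset_insert _ _)), ?_, ?_⟩
      · exact Γ.cube_mono' hc (Finset.insert_subset_insert i Finset.subset_union_right)
      · intro v h1 h2
        refine (Γ.cube_join_atom hc hiST).2.2 v
          (ih.2.2 v h1 ((Γ.cube_mono' hc (Finset.subset_insert i T)).trans h2)) ?_
        exact (Γ.cube_mono' hc (by simp : ({i} : Finset (Fin k)) ⊆ insert i T)).trans h2

lemma cube_lubset (hc : Γ.IsCube φ) :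
    Γ.IsLubSet (φ ∅) {x | ∃ i, x = φ {i}} (φ Finset.univ) := by
  classical
  refine ⟨Γ.cube_mono' hc (Finset.empty_subset _), ?_, ?_⟩
  · rintro a ⟨i, rfl⟩
    exact Γ.cube_mono' hc (Finset.subset_univ _)
  · intro v hp hatoms
    have : ∀ S : Finset (Fin k), Γ.le (φ S) v := by
      intro S
      induction S using Finset.induction with
      | empty => exact hp
      | @insert i S hiS ih =>
        exact (Γ.cube_join_atom hc hiS).2.2 v ih (hatoms _ ⟨i, rfl⟩)
    exact this _

end Cube

lemma bp_refl (p : V) : Γ.BooleanPair p p := by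
  have hall : ∀ S : Finset (Fin 0), S = ∅ :=
    fun S => Finset.eq_empty_of_forall_notMem (fun x => x.elim0)
  exact ⟨0, fun _ => p, fun a b _ => (hall a).trans (hall b).symm, rfl, rfl,
    fun S i _ => i.elim0⟩

lemma bp_edge {p q : V} (h : Γ.ori p q) : Γ.BooleanPair p q := by
  classical
  have huniv : ∀ S : Finset (Fin 1), S ≠ ∅ → S = Finset.univ := by
    intro S hS
    obtain ⟨x, hx⟩ := Finset.nonempty_iff_ne_empty.mpr hS
    exact Finset.eq_univ_iff_forall.mpr (fun j => by rwa [Subsingleton.elim j x])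
  refine ⟨1, fun S => if S = ∅ then p else q, ?_, if_pos rfl, ?_, ?_⟩
  · intro S T hST
    dsimp only at hST
    by_cases h1 : S = ∅ <;> by_cases h2 : T = ∅
    · rw [h1, h2]
    · rw [if_pos h1, if_neg h2] at hST; exact absurd hST (Γ.ori_ne h)
    · rw [if_neg h1, if_pos h2] at hST; exact absurd hST.symm (Γ.ori_ne h)
    · rw [huniv S h1, huniv T h2]
  · dsimp only
    rw [if_neg (Finset.univ_nonempty.ne_empty)]
  · intro S i hiS
    have hS : S = ∅ := by
      by_contra hS
      exact hiS ((huniv S hS) ▸ Finset.mem_univ i)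
    subst hS
    show Γ.ori (if (∅ : Finset (Fin 1)) = ∅ then p else q) (if insert i ∅ = ∅ then p else q)
    rw [if_pos rfl, if_neg (by simp : insert i (∅ : Finset (Fin 1)) ≠ ∅)]
    exact h

lemma bp_le {p q : V} (h : Γ.BooleanPair p q) : Γ.le p q := by
  obtain ⟨k, φ, hcb, h0, hu⟩ := Γ.bp_iff.mp h
  rw [← h0, ← hu]
  exact Γ.cube_mono' hcb (Finset.empty_subset _)

lemma bp_op {p q : V} (h : Γ.BooleanPair p q) : Γ.op.BooleanPair q p := by
  classical
  obtain ⟨k, φ, hinj, h0, hu, hedge⟩ := h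
  refine ⟨k, fun S => φ Sᶜ, ?_, ?_, ?_, ?_⟩
  · intro S T hST
    have h2 : Sᶜ = Tᶜ := hinj hST
    rw [← compl_compl S, h2, compl_compl]
  · show φ (∅ : Finset (Fin k))ᶜ = q
    rw [Finset.compl_empty]; exact hu
  · show φ (Finset.univ : Finset (Fin k))ᶜ = p
    rw [Finset.compl_univ]; exact h0
  · intro S i hiS
    show Γ.ori (φ (insert i S)ᶜ) (φ Sᶜ)
    have hmem : i ∈ Sᶜ := Finset.mem_compl.mpr hiS
    rw [Finset.compl_insert]
    have h2 : Sᶜ = insert i (Sᶜ.erase i) := (Finset.insert_erase hmem).symm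
    nth_rewrite 2 [h2]
    exact hedge (Sᶜ.erase i) i (Finset.notMem_erase i Sᶜ)


lemma finset_lub (p w : V) (s : Finset V) :
    (∀ x ∈ s, Γ.le x w) → (∀ x ∈ s, Γ.le p x) → Γ.le p w →
    ∃ u, Γ.le p u ∧ Γ.le u w ∧ (∀ x ∈ s, Γ.le x u) ∧
      ∀ v, Γ.le p v → (∀ x ∈ s, Γ.le x v) → Γ.le u v := by
  classical
  induction s using Finset.induction with
  | empty =>
    intro _ _ hpw
    exact ⟨p, Relation.ReflTransGen.refl, hpw, by simp, fun v hv _ => hv⟩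
  | @insert x s hxs ih =>
    intro hw hp hpw
    obtain ⟨u, h1, h2, h3, h4⟩ := ih (fun y hy => hw y (Finset.mem_insert_of_mem hy))
      (fun y hy => hp y (Finset.mem_insert_of_mem hy)) hpw
    obtain ⟨u', hu'⟩ := Γ.join_exists (b := p) (w := w) h1
      (hp x (Finset.mem_insert_self x s)) h2 (hw x (Finset.mem_insert_self x s))
    refine ⟨u', h1.trans hu'.1, hu'.2.2 w h2 (hw x (Finset.mem_insert_self x s)), ?_, ?_⟩
    · intro y hy
      rcases Finset.mem_insert.mp hy with rfl | hy
      · exact hu'.2.1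
      · exact (h3 y hy).trans hu'.1
    · intro v hv hall
      exact hu'.2.2 v (h4 v hv (fun y hy => hall y (Finset.mem_insert_of_mem hy)))
        (hall x (Finset.mem_insert_self x s))

lemma cube_ext {k : ℕ} {φ : Finset (Fin k) → V} (hc : Γ.IsCube φ) {a j' : V}
    (ha : Γ.ori (φ ∅) a) (hna : ¬ Γ.le a (φ Finset.univ))
    (hj' : Γ.IsJoin (φ Finset.univ) a j') :
    ∃ ψ : Finset (Fin (k+1)) → V, Γ.IsCube ψ ∧ ψ ∅ = φ ∅ ∧ ψ Finset.univ = j' := by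
  classical
  have hna' : ∀ T, ¬ Γ.le a (φ T) :=
    fun T hT => hna (hT.trans (Γ.cube_mono' hc (Finset.subset_univ T)))
  have hex : ∀ T : Finset (Fin k), ∃ u, Γ.IsJoin (φ T) a u := fun T =>
    Γ.join_exists (b := φ ∅) (w := j') (Γ.cube_mono' hc (Finset.empty_subset T))
      (Relation.ReflTransGen.single ha)
      ((Γ.cube_mono' hc (Finset.subset_univ T)).trans hj'.1) hj'.2.1
  choose f hf using hex
  have hcov : ∀ T, Γ.ori (φ T) (f T) := by
    intro T
    obtain ⟨j0, hj0, hcv⟩ := Γ.semi (Γ.G.dist (φ ∅) (φ T)) (φ ∅) a (φ T) j' ha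
      (Γ.cube_mono' hc (Finset.empty_subset T)) rfl hj'.2.1
      ((Γ.cube_mono' hc (Finset.subset_univ T)).trans hj'.1)
    have : j0 = f T := Γ.join_unique (Γ.join_comm hj0) (hf T)
    exact this ▸ hcv (hna' T)
  have hrankf : ∀ T, Γ.G.dist (φ ∅) (f T) = T.card + 1 := by
    intro T
    have := Γ.le_dist (Γ.cube_mono' hc (Finset.empty_subset T))
      (Relation.ReflTransGen.single (hcov T))
    rw [Γ.dist_of_ori (hcov T), Γ.cube_rank hc] at this
    omega
  have hplef : ∀ T, Γ.le (φ ∅) (f T) :=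
    fun T => (Γ.cube_mono' hc (Finset.empty_subset T)).trans
      (Relation.ReflTransGen.single (hcov T))
  have hfmono : ∀ {T T' : Finset (Fin k)}, T ⊆ T' → Γ.le (f T) (f T') := by
    intro T T' hsub
    exact (hf T).2.2 _ ((Γ.cube_mono' hc hsub).trans (hf T').1) (hf T').2.1
  have hfinj : ∀ T T', f T = f T' → T = T' := by
    intro T T' heq
    by_contra hne
    have hcards : T.card = T'.card := by
      have h1 := hrankf T
      rw [heq, hrankf T'] at h1
      omega
    have hUled : Γ.le (φ (T ∪ T')) (f T) :=
      (Γ.cube_join hc T T').2.2 _ (hf T).1 (heq ▸ (hf T').1)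
    have hcardU : T.card + 1 ≤ (T ∪ T').card := by
      by_contra hh
      have hTU : T = T ∪ T' := Finset.eq_of_subset_of_card_le Finset.subset_union_left
        (by omega)
      have hT'T : T' ⊆ T := hTU ▸ Finset.subset_union_right
      exact hne ((Finset.eq_of_subset_of_card_le hT'T (by omega)).symm)
    have hD := Γ.le_dist (Γ.cube_mono' hc (Finset.empty_subset _)) hUled
    rw [Γ.cube_rank hc, hrankf T] at hD
    have : φ (T ∪ T') = f T := Γ.eq_of_le_rank
      (Γ.cube_mono' hc (Finset.empty_subset _)) hUled (by rw [Γ.cube_rank hc, hrankf T]; omega)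
    exact hna' (T ∪ T') (this ▸ (hf T).2.1)
  have hmix : ∀ T T', φ T ≠ f T' := fun T T' heq => hna' T (heq ▸ (hf T').2.1)
  -- the restriction map
  set res : Finset (Fin (k+1)) → Finset (Fin k) :=
    fun S => Finset.univ.filter (fun i => i.castSucc ∈ S) with hres
  have hres_mem : ∀ (S : Finset (Fin (k+1))) (i : Fin k), i ∈ res S ↔ i.castSucc ∈ S := by
    intro S i
    rw [hres]
    simp
  have hres_insert_last : ∀ S, res (insert (Fin.last k) S) = res S := by
    intro S
    ext i
    rw [hres_mem, hres_mem, Finset.mem_insert]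
    have hne : (i.castSucc : Fin (k+1)) ≠ Fin.last k := (Fin.castSucc_lt_last i).ne
    constructor
    · rintro (h | h)
      · exact absurd h hne
      · exact h
    · exact Or.inr
  have hres_insert : ∀ (S : Finset (Fin (k+1))) (i : Fin k),
      res (insert i.castSucc S) = insert i (res S) := by
    intro S i
    ext i'
    rw [hres_mem, Finset.mem_insert, Finset.mem_insert, hres_mem]
    constructor
    · rintro (h | h)
      · exact Or.inl (Fin.castSucc_injective k h)
      · exact Or.inr h
    · rintro (h | h)
      · exact Or.inl (by rw [h])
      · exact Or.inr h
  have hres_univ : res Finset.univ = Finset.univ := by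
    ext i; rw [hres_mem]; simp
  have hres_empty : res ∅ = ∅ := by
    ext i; rw [hres_mem]; simp
  have hres_eq : ∀ S S', res S = res S' →
      ((Fin.last k) ∈ S ↔ (Fin.last k) ∈ S') → S = S' := by
    intro S S' h hl
    ext i
    rcases Fin.eq_castSucc_or_eq_last i with ⟨j, rfl⟩ | rfl
    · rw [← hres_mem, ← hres_mem, h]
    · exact hl
  refine ⟨fun S => if Fin.last k ∈ S then f (res S) else φ (res S), ⟨?_, ?_⟩, ?_, ?_⟩
  · -- injectivity
    intro S T h
    dsimp only at h
    by_cases hS : Fin.last k ∈ S <;> by_cases hT : Fin.last k ∈ T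
    · rw [if_pos hS, if_pos hT] at h
      exact hres_eq S T (hfinj _ _ h) (by simp [hS, hT])
    · rw [if_pos hS, if_neg hT] at h
      exact absurd h.symm (hmix _ _)
    · rw [if_neg hS, if_pos hT] at h
      exact absurd h (hmix _ _)
    · rw [if_neg hS, if_neg hT] at h
      exact hres_eq S T (hc.1 h) (by simp [hS, hT])
  · -- edges
    intro S i hiS
    by_cases hil : i = Fin.last k
    · subst hil
      dsimp only
      rw [if_neg hiS, if_pos (Finset.mem_insert_self _ _), hres_insert_last]
      exact hcov (res S)
    · obtain ⟨i', rfl⟩ := Fin.exists_castSucc_eq.mpr hil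
      have hi'S : i' ∉ res S := fun hh => hiS ((hres_mem S i').mp hh)
      by_cases hl : Fin.last k ∈ S
      · dsimp only
        rw [if_pos hl, if_pos (Finset.mem_insert_of_mem hl), hres_insert]
        have hle : Γ.le (f (res S)) (f (insert i' (res S))) :=
          hfmono (Finset.subset_insert i' (res S))
        refine Γ.ori_of hle ?_
        have hD := Γ.le_dist (hplef (res S)) hle
        rw [hrankf, hrankf, Finset.card_insert_of_notMem hi'S] at hD
        omega
      · dsimp only
        have hlast : Fin.last k ∉ insert i'.castSucc S := by
          rw [Finset.mem_insert]
          rintro (h | h)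
          · exact (Fin.castSucc_lt_last i').ne h.symm
          · exact hl h
        rw [if_neg hl, if_neg hlast, hres_insert]
        exact hc.2 (res S) i' hi'S
  · -- bottom
    dsimp only
    rw [if_neg (Finset.notMem_empty _), hres_empty]
  · -- top
    dsimp only
    rw [if_pos (Finset.mem_univ _), hres_univ]
    exact Γ.join_unique (hf Finset.univ) hj'


lemma char_of_lub {p q : V} {A : Set V} (hatoms : ∀ a ∈ A, Γ.ori p a)
    (hlub : Γ.IsLubSet p A q) : Γ.BooleanPair p q := by
  classical
  suffices h : ∀ (n : ℕ) (j : V), Γ.G.dist j q = n → Γ.le p j → Γ.le j q →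
      Γ.BooleanPair p j → Γ.BooleanPair p q by
    exact h (Γ.G.dist p q) p rfl Relation.ReflTransGen.refl hlub.1 (Γ.bp_refl p)
  intro n
  induction n using Nat.strong_induction_on with
  | _ n IH =>
    intro j hd hpj hjq hbp
    by_cases hall : ∀ a ∈ A, Γ.le a j
    · have hqj : Γ.le q j := hlub.2.2 j hpj hall
      rwa [← Γ.le_antisymm' hjq hqj]
    · push_neg at hall
      obtain ⟨a, haA, hnaj⟩ := hall
      obtain ⟨k, φ, hcb, h0, hu⟩ := Γ.bp_iff.mp hbp
      obtain ⟨j2, hj2⟩ := Γ.join_exists (b := p) (w := q) hpj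
        (Relation.ReflTransGen.single (hatoms a haA)) hjq (hlub.2.1 a haA)
      obtain ⟨ψ, hψ, hψ0, hψu⟩ := Γ.cube_ext hcb (by rw [h0]; exact hatoms a haA)
        (by rw [hu]; exact hnaj) (by rw [hu]; exact hj2)
      have hbp2 : Γ.BooleanPair p j2 := Γ.bp_iff.mpr ⟨k + 1, ψ, hψ, by rw [hψ0, h0], hψu⟩
      have hpj2 : Γ.le p j2 := hpj.trans hj2.1
      have hj2q : Γ.le j2 q := hj2.2.2 q hjq (hlub.2.1 a haA)
      have hdj : Γ.G.dist p j = k := by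
        have := Γ.cube_rank hcb Finset.univ
        rwa [h0, hu, Finset.card_univ, Fintype.card_fin] at this
      have hdj2 : Γ.G.dist p j2 = k + 1 := by
        have := Γ.cube_rank hψ Finset.univ
        rwa [hψ0, h0, hψu, Finset.card_univ, Fintype.card_fin] at this
      have h1 := Γ.le_dist hpj hjq
      have h2 := Γ.le_dist hpj2 hj2q
      exact IH (Γ.G.dist j2 q) (by omega) j2 rfl hpj2 hj2q hbp2

lemma bp_lub {p q : V} (h : Γ.BooleanPair p q) :
    ∃ A : Set V, (∀ a ∈ A, Γ.ori p a) ∧ Γ.IsLubSet p A q := by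
  obtain ⟨k, φ, hcb, h0, hu⟩ := Γ.bp_iff.mp h
  refine ⟨{x | ∃ i, x = φ {i}}, ?_, ?_⟩
  · rintro a ⟨i, rfl⟩
    exact h0 ▸ Γ.cube_atom hcb i
  · have := Γ.cube_lubset hcb
    rwa [h0, hu] at this

lemma bp_join {p q1 q2 j : V} (h1 : Γ.BooleanPair p q1) (h2 : Γ.BooleanPair p q2)
    (hj : Γ.IsJoin q1 q2 j) : Γ.BooleanPair p j := by
  obtain ⟨A1, ha1, hl1⟩ := Γ.bp_lub h1
  obtain ⟨A2, ha2, hl2⟩ := Γ.bp_lub h2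
  refine Γ.char_of_lub (A := A1 ∪ A2) ?_ ?_
  · rintro a (h | h)
    · exact ha1 a h
    · exact ha2 a h
  · refine ⟨hl1.1.trans hj.1, ?_, ?_⟩
    · rintro a (h | h)
      · exact (hl1.2.1 a h).trans hj.1
      · exact (hl2.2.1 a h).trans hj.2.1
    · intro v hpv hav
      exact hj.2.2 v (hl1.2.2 v hpv (fun a h => hav a (Or.inl h)))
        (hl2.2.2 v hpv (fun a h => hav a (Or.inr h)))

lemma step_down {p c b : V} (hbp : Γ.BooleanPair p c) (hbc : Γ.ori b c) (hpb : Γ.le p b) :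
    Γ.BooleanPair p b := by
  classical
  obtain ⟨A, hatoms, hlub⟩ := Γ.bp_lub hbp
  have hbcle : Γ.le b c := Relation.ReflTransGen.single hbc
  have hpc : Γ.le p c := hpb.trans hbcle
  set B : Finset V := Finset.univ.filter (fun x => Γ.ori p x ∧ Γ.le x b) with hB
  have hBmem : ∀ x, x ∈ B ↔ (Γ.ori p x ∧ Γ.le x b) := by
    intro x; rw [hB, Finset.mem_filter]; simp
  obtain ⟨u, hpu, hub, hubs, hleast⟩ := Γ.finset_lub p b B
    (fun x hx => ((hBmem x).mp hx).2) (fun x hx => Relation.ReflTransGen.single ((hBmem x).mp hx).1) hpb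
  by_cases hub' : u = b
  · subst hub'
    refine Γ.char_of_lub (A := ↑B) (fun a ha => ((hBmem a).mp ha).1) ⟨hpb, ?_, ?_⟩
    · intro a ha
      exact ((hBmem a).mp ha).2
    · intro v hpv hall
      exact hleast v hpv (fun x hx => hall x hx)
  · exfalso
    have hdd1 := Γ.le_dist hpu hub
    have hdd2 := Γ.le_dist hpb hbcle
    rw [Γ.dist_of_ori hbc] at hdd2
    have hdub : 1 ≤ Γ.G.dist u b := by
      rcases Nat.eq_zero_or_pos (Γ.G.dist u b) with h | h
      · exact absurd (Γ.eq_of_le_dist hub h) hub'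
      · omega
    obtain ⟨a1, ha1A, ha1b⟩ : ∃ a ∈ A, ¬ Γ.le a b := by
      by_contra hh
      push_neg at hh
      exact Γ.ori_ne hbc (Γ.le_antisymm' hbcle (hlub.2.2 b hpb hh))
    have hpa1 : Γ.ori p a1 := hatoms a1 ha1A
    have ha1u : ¬ Γ.le a1 u := fun hh => ha1b (hh.trans hub)
    obtain ⟨w1, hw1, hcov1⟩ := Γ.semi (Γ.G.dist p u) p a1 u c hpa1 hpu rfl
      (hlub.2.1 a1 ha1A) (hub.trans hbcle)
    have horu : Γ.ori u w1 := hcov1 ha1u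
    have hw1c : Γ.le w1 c := hw1.2.2 c (hlub.2.1 a1 ha1A) (hub.trans hbcle)
    have hpw1 : Γ.le p w1 := hpu.trans (Relation.ReflTransGen.single horu)
    have hrw1 : Γ.G.dist p w1 = Γ.G.dist p u + 1 := by
      have := Γ.le_dist hpu (Relation.ReflTransGen.single horu)
      rw [Γ.dist_of_ori horu] at this
      omega
    obtain ⟨a2, ha2A, ha2w⟩ : ∃ a ∈ A, ¬ Γ.le a w1 := by
      by_contra hh
      push_neg at hh
      have hcw1 : Γ.le c w1 := hlub.2.2 w1 hpw1 hh
      have := Γ.le_dist hpc hcw1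
      omega
    have ha2b : ¬ Γ.le a2 b := by
      intro hh
      have ha2B : a2 ∈ B := (hBmem a2).mpr ⟨hatoms a2 ha2A, hh⟩
      exact ha2w ((hubs a2 ha2B).trans (Relation.ReflTransGen.single horu))
    have ha2a1 : ¬ Γ.le a2 a1 := fun hh => ha2w (hh.trans hw1.1)
    have hpa1le : Γ.le p a1 := Relation.ReflTransGen.single hpa1
    obtain ⟨j1, hj1, hcovj⟩ := Γ.semi (Γ.G.dist p a1) p a2 a1 c (hatoms a2 ha2A)
      hpa1le rfl (hlub.2.1 a2 ha2A) (hlub.2.1 a1 ha1A)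
    have horj1 : Γ.ori a1 j1 := hcovj ha2a1
    have hj1c : Γ.le j1 c := hj1.2.2 c (hlub.2.1 a2 ha2A) (hlub.2.1 a1 ha1A)
    have hpj1 : Γ.le p j1 := hpa1le.trans (Relation.ReflTransGen.single horj1)
    have hrj1 : Γ.G.dist p j1 = 2 := by
      have h1 := Γ.le_dist hpa1le (Relation.ReflTransGen.single horj1)
      rw [Γ.dist_of_ori horj1, Γ.dist_of_ori hpa1] at h1
      omega
    have hjoin_ab : Γ.IsJoin a1 b c := by
      obtain ⟨jb, hjb, hcb'⟩ := Γ.semi (Γ.G.dist p b) p a1 b c hpa1 hpb rfl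
        (hlub.2.1 a1 ha1A) hbcle
      have horb : Γ.ori b jb := hcb' ha1b
      have hjbc : Γ.le jb c := hjb.2.2 c (hlub.2.1 a1 ha1A) hbcle
      have hrjb : Γ.G.dist p jb = Γ.G.dist p b + 1 := by
        have := Γ.le_dist hpb (Relation.ReflTransGen.single horb)
        rw [Γ.dist_of_ori horb] at this
        omega
      have : jb = c := Γ.eq_of_le_rank (hpb.trans (Relation.ReflTransGen.single horb))
        hjbc (by omega)
      exact this ▸ hjb
    obtain ⟨st, hst⟩ := Γ.meet_exists (b := p) (w := c) hpj1 hpb hj1c hbcle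
    have hjoin_j1b : Γ.IsJoin j1 b c :=
      ⟨hj1c, hbcle, fun v h1 h2 => hjoin_ab.2.2 v (hj1.2.1.trans h1) h2⟩
    have hsup := Γ.super (p := p) hpj1 hpb hst hjoin_j1b
    rw [SimpleGraph.dist_comm (u := b) (v := st), SimpleGraph.dist_comm (u := c) (v := j1)] at hsup
    have hps : Γ.le p st := hst.2.2 p hpj1 hpb
    have hd3 := Γ.le_dist hps hst.1
    have hd4 := Γ.le_dist hps hst.2.1
    have hd5 := Γ.le_dist hpj1 hj1c
    by_cases hs2 : Γ.G.dist p st = 2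
    · have hseq : st = j1 := Γ.eq_of_le_rank hps hst.1 (by omega)
      exact ha1b ((Relation.ReflTransGen.single horj1).trans (hseq ▸ hst.2.1))
    · have hps1 : Γ.G.dist p st = 1 := by omega
      have hors : Γ.ori p st := Γ.ori_of hps hps1
      have hstb : Γ.le st b := hst.2.1
      have hstB : st ∈ B := (hBmem st).mpr ⟨hors, hstb⟩
      have hstu : Γ.le st u := hubs st hstB
      have hsa1 : ¬ Γ.le st a1 := by
        intro hh
        have : st = a1 := Γ.eq_of_le_rank hps hh (by rw [hps1, Γ.dist_of_ori hpa1])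
        exact ha1b (this ▸ hstb)
      obtain ⟨jf, hjf, hcf⟩ := Γ.semi (Γ.G.dist p a1) p st a1 c hors hpa1le rfl
        (hst.1.trans hj1c) (hlub.2.1 a1 ha1A)
      have horf : Γ.ori a1 jf := hcf hsa1
      have hpjf : Γ.le p jf := hpa1le.trans (Relation.ReflTransGen.single horf)
      have hrjf : Γ.G.dist p jf = 2 := by
        have := Γ.le_dist hpa1le (Relation.ReflTransGen.single horf)
        rw [Γ.dist_of_ori horf, Γ.dist_of_ori hpa1] at this
        omega
      have hjfj1 : Γ.le jf j1 := hjf.2.2 j1 hst.1 hj1.2.1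
      have hfeq : jf = j1 := Γ.eq_of_le_rank hpjf hjfj1 (by omega)
      have ha2w1 : Γ.le a2 w1 := by
        have h1 : Γ.le jf w1 := hjf.2.2 w1
          (hstu.trans (Relation.ReflTransGen.single horu)) hw1.1
        exact hj1.1.trans (hfeq ▸ h1)
      exact ha2w ha2w1



lemma bp_down : ∀ (n : ℕ) (p b q : V), Γ.G.dist b q = n → Γ.le p b → Γ.le b q →
    Γ.BooleanPair p q → Γ.BooleanPair p b := by
  intro n
  induction n using Nat.strong_induction_on with
  | _ n IH =>
    intro p b q hd hpb hbq hbp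
    rcases Relation.ReflTransGen.cases_head hbq with rfl | ⟨c, horc, hcq⟩
    · exact hbp
    · have hdc : Γ.G.dist b q = 1 + Γ.G.dist c q := by
        have := Γ.le_dist (Relation.ReflTransGen.single horc) hcq
        rw [Γ.dist_of_ori horc] at this
        omega
      have hbpc : Γ.BooleanPair p c := IH (Γ.G.dist c q) (by omega) p c q rfl
        (hpb.trans (Relation.ReflTransGen.single horc)) hcq hbp
      exact Γ.step_down hbpc horc hpb

lemma op_op : Γ.op.op = Γ := rfl

lemma bp_unop {p q : V} (h : Γ.op.BooleanPair p q) : Γ.BooleanPair q p := by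
  have := Γ.op.bp_op h
  rwa [Γ.op_op] at this

lemma bp_interval {p q a b : V} (h : Γ.BooleanPair p q) (hpa : Γ.le p a)
    (hab : Γ.le a b) (hbq : Γ.le b q) : Γ.BooleanPair a b := by
  have h1 : Γ.BooleanPair p b := Γ.bp_down (Γ.G.dist b q) p b q rfl (hpa.trans hab) hbq h
  have h2 : Γ.op.BooleanPair b p := Γ.bp_op h1
  have h3 : Γ.op.BooleanPair b a := Γ.op.bp_down (Γ.op.G.dist a p) b a p rfl
    (Γ.op_le.mpr hab) (Γ.op_le.mpr hpa) h2
  exact Γ.bp_unop h3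

lemma bp_meet {p1 p2 q m : V} (h1 : Γ.BooleanPair p1 q) (h2 : Γ.BooleanPair p2 q)
    (hm : Γ.IsMeet p1 p2 m) : Γ.BooleanPair m q := by
  have o1 : Γ.op.BooleanPair q p1 := Γ.bp_op h1
  have o2 : Γ.op.BooleanPair q p2 := Γ.bp_op h2
  have oj : Γ.op.IsJoin p1 p2 m := Γ.op_isJoin.mpr hm
  exact Γ.bp_unop (Γ.op.bp_join o1 o2 oj)

end ModularComplex

end Aux

/-- The Boolean-pair relation of a modular complex is admissible. -/
theorem booleanPair_admissible (Γ : ModularComplex V) :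
    (∀ p q : V, Γ.BooleanPair p q → Γ.le p q) ∧
    (∀ p : V, Γ.BooleanPair p p) ∧
    (∀ p q : V, Γ.ori p q → Γ.BooleanPair p q) ∧
    (∀ p q a b : V, Γ.BooleanPair p q → Γ.le a b →
      a ∈ Γ.Icc p q → b ∈ Γ.Icc p q → Γ.BooleanPair a b) ∧
    (∀ p q1 q2 j : V, Γ.BooleanPair p q1 → Γ.BooleanPair p q2 →
      Γ.IsJoin q1 q2 j → Γ.BooleanPair p j) ∧
    (∀ p1 p2 q m : V, Γ.BooleanPair p1 q → Γ.BooleanPair p2 q →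
      Γ.IsMeet p1 p2 m → Γ.BooleanPair m q) := by
  refine ⟨fun p q h => Γ.bp_le h, fun p => Γ.bp_refl p, fun p q h => Γ.bp_edge h,
    ?_, fun p q1 q2 j h1 h2 hj => Γ.bp_join h1 h2 hj,
    fun p1 p2 q m h1 h2 hm => Γ.bp_meet h1 h2 hm⟩
  intro p q a b h hab ha hb
  exact Γ.bp_interval h ha.1 hab hb.2

end ZeroExt
end

section
/- Let (Γ,⊑) be an extended modular complex. Suppose p ⊑ q1, p ⊑ q2, q1 ≠ q2, and q is a vertex adjacent in the underlying graph to both q1 and q2. Then p ⊑ q. -/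
namespace ZeroExt

variable {V : Type*}

variable [Fintype V]

section Aux

open SimpleGraph Relation

variable (Γ : ModularComplex V)

/-- In a connected modular graph, the distances from a fixed vertex `x` to the two
endpoints of an edge always differ by exactly one. -/
lemma ModularComplex.adj_dist_s3 {u v : V} (h : Γ.G.Adj u v) (x : V) :
    Γ.G.dist u x + 1 = Γ.G.dist v x ∨ Γ.G.dist v x + 1 = Γ.G.dist u x := by
  obtain ⟨m, hm1, hm2, hm3⟩ := Γ.modular u v x
  simp only [interval, Set.mem_setOf_eq] at hm1 hm2 hm3
  have hd : Γ.G.dist u v = 1 := SimpleGraph.dist_eq_one_iff_adj.2 h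
  rcases (by omega : Γ.G.dist u m = 0 ∨ Γ.G.dist m v = 0) with h0 | h0
  · -- m = u
    have hmu : u = m := (Γ.connected.dist_eq_zero_iff.1 h0)
    subst hmu
    have hvu : Γ.G.dist v u = 1 := SimpleGraph.dist_eq_one_iff_adj.2 h.symm
    left; omega
  · -- m = v
    have hmv : m = v := (Γ.connected.dist_eq_zero_iff.1 h0)
    subst hmv
    right; omega

/-- Quadrangle condition for modular graphs. -/
lemma ModularComplex.quad_s3 {x c v w : V} (k : ℕ) (hc : Γ.G.dist c x = k + 1)
    (hv : Γ.G.Adj v c) (hw : Γ.G.Adj w c) (hvw : v ≠ w)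
    (hxv : Γ.G.dist v x = k) (hxw : Γ.G.dist w x = k) :
    ∃ y, Γ.G.Adj v y ∧ Γ.G.Adj w y ∧ Γ.G.dist y x + 1 = k := by
  have hvw2 : Γ.G.dist v w = 2 := by
    have h1 : Γ.G.dist v w ≤ 2 := by
      have ht : Γ.G.dist v w ≤ Γ.G.dist v c + Γ.G.dist c w := Γ.connected.dist_triangle
      have e1 : Γ.G.dist v c = 1 := SimpleGraph.dist_eq_one_iff_adj.2 hv
      have e2 : Γ.G.dist c w = 1 := SimpleGraph.dist_eq_one_iff_adj.2 hw.symm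
      omega
    have hne1 : Γ.G.dist v w ≠ 1 := by
      intro h1
      have hadj : Γ.G.Adj v w := SimpleGraph.dist_eq_one_iff_adj.1 h1
      rcases Γ.adj_dist_s3 hadj x with h | h <;> omega
    have hne0 : Γ.G.dist v w ≠ 0 := fun h0 => hvw (Γ.connected.dist_eq_zero_iff.1 h0)
    omega
  obtain ⟨m, hm1, hm2, hm3⟩ := Γ.modular v w x
  simp only [interval, Set.mem_setOf_eq] at hm1 hm2 hm3
  rcases (by omega : Γ.G.dist v m = 0 ∨ Γ.G.dist m w = 0 ∨
      (Γ.G.dist v m = 1 ∧ Γ.G.dist m w = 1)) with h0 | h0 | ⟨e1, e2⟩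
  · exfalso
    have hmv : v = m := Γ.connected.dist_eq_zero_iff.1 h0
    subst hmv
    have : Γ.G.dist w v = 2 := by rw [SimpleGraph.dist_comm]; exact hvw2
    omega
  · exfalso
    have hmw : m = w := Γ.connected.dist_eq_zero_iff.1 h0
    subst hmw
    omega
  · refine ⟨m, SimpleGraph.dist_eq_one_iff_adj.1 e1, ?_, by omega⟩
    exact SimpleGraph.dist_eq_one_iff_adj.1 (by rw [SimpleGraph.dist_comm]; exact e2)

/-- Gradedness, edge version: distances to an upper vertex increase along down-edges. -/
lemma ModularComplex.lemG {v x : V} (hvx : Γ.le v x) :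
    ∀ u, Γ.ori u v → Γ.G.dist u x = Γ.G.dist v x + 1 := by
  induction hvx using Relation.ReflTransGen.head_induction_on with
  | refl =>
    intro u hu
    have h1 : Γ.G.dist u x = 1 := SimpleGraph.dist_eq_one_iff_adj.2 (Γ.ori_adj hu)
    have h0 : Γ.G.dist x x = 0 := SimpleGraph.dist_self
    omega
  | @head v' c h' hcx ih =>
    intro u hu
    have hvx' : Γ.G.dist v' x = Γ.G.dist c x + 1 := ih v' h'
    set k := Γ.G.dist c x with hk
    have hadj_uv : Γ.G.Adj u v' := Γ.ori_adj hu
    rcases Γ.adj_dist_s3 hadj_uv x with hcase | hcase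
    · -- bad case : dist u x = k
      exfalso
      have hdu : Γ.G.dist u x = k := by omega
      have huc : u ≠ c := by
        intro he; subst he
        exact (Γ.ori_adj hu).ne
          (Γ.acyclic (Relation.ReflTransGen.single hu) (Relation.ReflTransGen.single h'))
      obtain ⟨y, huy, hcy, hy⟩ := Γ.quad_s3 k hvx' hadj_uv ((Γ.ori_adj h').symm) huc hdu hk.symm
      have hcyc : IsFourCycle Γ.G u v' c y := by
        refine ⟨hadj_uv, Γ.ori_adj h', hcy, huy.symm, huc, ?_⟩
        intro he; rw [he] at hvx'; omega
      have hyc : Γ.ori y c := Γ.admissible hcyc hu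
      have := ih y hyc
      omega
    · omega

/-- Gradedness along chains. -/
lemma ModularComplex.lemGstar {u v x : V} (huv : Γ.le u v) (hvx : Γ.le v x) :
    Γ.G.dist u x = Γ.G.dist u v + Γ.G.dist v x := by
  induction huv using Relation.ReflTransGen.head_induction_on with
  | refl => rw [SimpleGraph.dist_self]; omega
  | @head u' w h' hwv ih =>
    have h1 : Γ.G.dist u' x = Γ.G.dist w x + 1 := Γ.lemG (hwv.trans hvx) u' h'
    have h2 : Γ.G.dist u' v = Γ.G.dist w v + 1 := Γ.lemG hwv u' h'
    omega

/-- Geodesics towards an upper bound are directed (first-edge version). -/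
lemma ModularComplex.lemI1 : ∀ n : ℕ, ∀ u z x : V, Γ.G.dist u x = n → Γ.le u x →
    Γ.G.Adj u z → Γ.G.dist z x + 1 = n → Γ.ori u z ∧ Γ.le z x := by
  intro n
  induction n using Nat.strong_induction_on with
  | _ n ih =>
    intro u z x hn hux hadj hz
    obtain rfl | ⟨w, huw, hwx⟩ := hux.cases_head
    · exfalso
      have h0 : Γ.G.dist u u = 0 := SimpleGraph.dist_self
      omega
    · have hw : Γ.G.dist w x + 1 = n := by
        have := Γ.lemG hwx u huw; omega
      have horiuz : Γ.ori u z := by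
        rcases Γ.ori_total hadj with h | h
        · exact h
        · exfalso
          have hst : Γ.G.dist z x = Γ.G.dist z u + Γ.G.dist u x :=
            Γ.lemGstar (Relation.ReflTransGen.single h) hux
          have hzu : Γ.G.dist z u = 1 := SimpleGraph.dist_eq_one_iff_adj.2 hadj.symm
          omega
      refine ⟨horiuz, ?_⟩
      by_cases hwz : w = z
      · exact hwz ▸ hwx
      · obtain ⟨y, hwy, hzy, hy⟩ := Γ.quad_s3 (Γ.G.dist z x) (by omega)
          ((Γ.ori_adj huw).symm) hadj.symm hwz (by omega) rfl
        have hcyc : IsFourCycle Γ.G u w y z := by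
          refine ⟨Γ.ori_adj huw, hwy, hzy.symm, hadj.symm, ?_, hwz⟩
          intro he; rw [he] at hn; omega
        have hzy_ori : Γ.ori z y := Γ.admissible hcyc huw
        have hres := ih (Γ.G.dist z x) (by omega) w y x (by omega) hwx hwy (by omega)
        exact Relation.ReflTransGen.head hzy_ori hres.2

/-- A common upper neighbor of two distinct vertices is below every common upper bound. -/
lemma ModularComplex.lemJ {q1 q2 q x : V} (h1 : Γ.ori q1 q) (h2 : Γ.ori q2 q)
    (hne : q1 ≠ q2) (hx1 : Γ.le q1 x) (hx2 : Γ.le q2 x) : Γ.le q x := by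
  rcases Γ.adj_dist_s3 (Γ.ori_adj h1) x with hc1 | hc1
  swap
  · exact (Γ.lemI1 (Γ.G.dist q1 x) q1 q x rfl hx1 (Γ.ori_adj h1) hc1).2
  rcases Γ.adj_dist_s3 (Γ.ori_adj h2) x with hc2 | hc2
  swap
  · exact (Γ.lemI1 (Γ.G.dist q2 x) q2 q x rfl hx2 (Γ.ori_adj h2) hc2).2
  exfalso
  -- dist q x = dist q1 x + 1 = dist q2 x + 1
  have hn0 : Γ.G.dist q1 x ≠ 0 := by
    intro h0
    have hq1 : q1 = x := Γ.connected.dist_eq_zero_iff.1 h0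
    have hq2 : q2 = x := Γ.connected.dist_eq_zero_iff.1 (by omega)
    exact hne (hq1.trans hq2.symm)
  obtain ⟨y, h1y, h2y, hy⟩ := Γ.quad_s3 (Γ.G.dist q1 x) hc1.symm (Γ.ori_adj h1)
    (Γ.ori_adj h2) hne rfl (by omega)
  have hcyc : IsFourCycle Γ.G q2 q q1 y := by
    refine ⟨Γ.ori_adj h2, (Γ.ori_adj h1).symm, h1y, h2y.symm, ?_, ?_⟩
    · exact hne.symm
    · intro he; rw [← he] at hy; omega
  have hyq1 : Γ.ori y q1 := Γ.admissible hcyc h2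
  have hq1y : Γ.ori q1 y := (Γ.lemI1 (Γ.G.dist q1 x) q1 y x rfl hx1 h1y (by omega)).1
  exact (Γ.ori_adj hq1y).ne
    (Γ.acyclic (Relation.ReflTransGen.single hq1y) (Relation.ReflTransGen.single hyq1))

/-- The reversed modular complex. -/
def ModularComplex.rev (Γ : ModularComplex V) : ModularComplex V where
  G := Γ.G
  connected := Γ.connected
  modular := Γ.modular
  ori x y := Γ.ori y x
  ori_adj h := (Γ.ori_adj h).symm
  ori_total := by intro x y h; show Γ.ori y x ∨ Γ.ori x y; exact Γ.ori_total h.symm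
  acyclic h1 h2 :=
    Γ.acyclic (Relation.reflTransGen_swap.1 h2) (Relation.reflTransGen_swap.1 h1)
  admissible := by
    intro x1 x2 x3 x4 hc h
    obtain ⟨a12, a23, a34, a41, ne13, ne24⟩ := hc
    exact Γ.admissible (x1 := x2) (x2 := x1) (x3 := x4) (x4 := x3)
      ⟨a12.symm, a41.symm, a34.symm, a23.symm, ne24, ne13⟩ h

lemma ModularComplex.rev_le {a b : V} : (Γ.rev).le a b ↔ Γ.le b a :=
  Relation.reflTransGen_swap

/-- Dual of `lemJ`. -/
lemma ModularComplex.lemM {q q1 q2 x : V} (h1 : Γ.ori q q1) (h2 : Γ.ori q q2)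
    (hne : q1 ≠ q2) (hx1 : Γ.le x q1) (hx2 : Γ.le x q2) : Γ.le x q := by
  have := Γ.rev.lemJ (q1 := q1) (q2 := q2) (q := q) (x := x) h1 h2 hne
    (Γ.rev_le.2 hx1) (Γ.rev_le.2 hx2)
  exact Γ.rev_le.1 this

end Aux

/-- If `p ⊑ q1`, `p ⊑ q2`, `q1 ≠ q2` and `q` is a common neighbor of
`q1, q2`, then `p ⊑ q`. -/
theorem sq_of_common_neighbor (Γ : ExtendedModularComplex V) (p q1 q2 q : V)
    (h1 : Γ.sq p q1) (h2 : Γ.sq p q2) (hne : q1 ≠ q2)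
    (ha1 : Γ.G.Adj q q1) (ha2 : Γ.G.Adj q q2) : Γ.sq p q := by
  rcases Γ.ori_total ha1 with hq1 | hq1
  · -- `q → q1`
    have hpq : Γ.le p q := by
      rcases Γ.ori_total ha2 with hq2 | hq2
      · -- `q → q2` : meet case
        exact Γ.toModularComplex.lemM hq1 hq2 hne (Γ.sq_le h1) (Γ.sq_le h2)
      · -- `q2 → q` : `p ⪯ q2 ⪯ q`
        exact (Γ.sq_le h2).trans (Relation.ReflTransGen.single hq2)
    exact Γ.sq_interval h1 hpq ⟨Relation.ReflTransGen.refl, Γ.sq_le h1⟩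
      ⟨hpq, Relation.ReflTransGen.single hq1⟩
  · rcases Γ.ori_total ha2 with hq2 | hq2
    · -- `q1 → q`, `q → q2` : `p ⪯ q1 ⪯ q ⪯ q2`
      have hpq : Γ.le p q := (Γ.sq_le h1).trans (Relation.ReflTransGen.single hq1)
      exact Γ.sq_interval h2 hpq ⟨Relation.ReflTransGen.refl, Γ.sq_le h2⟩
        ⟨hpq, Relation.ReflTransGen.single hq2⟩
    · -- `q1 → q`, `q2 → q` : join case
      exact Γ.sq_join h1 h2 ⟨Relation.ReflTransGen.single hq1,
        Relation.ReflTransGen.single hq2,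
        fun x hx1 hx2 => Γ.toModularComplex.lemJ hq1 hq2 hne hx1 hx2⟩

end ZeroExt
end

section
/- Let (Γ,⊑) be an extended modular complex, let p ⊑ q, let A' be a convex set of vertices, let p' be a gate of p at A' and q' a gate of q at A'. Then p' ⊑ q'. -/
namespace ZeroExt

variable {V : Type*}

variable [Fintype V]

/-! ### Auxiliary infrastructure for STATEMENT 5 -/

section Aux

set_option linter.unusedSectionVars false

set_option maxHeartbeats 1000000

open SimpleGraph

variable {G : SimpleGraph V}

namespace ZeroExtAux

/-- Basic: adjacent vertices have distance 1. -/
lemma adj_dist (h : G.Adj u v) : G.dist u v = 1 :=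
  SimpleGraph.dist_eq_one_iff_adj.mpr h

lemma dcomm (u v : V) : G.dist u v = G.dist v u := SimpleGraph.dist_comm

lemma dist_eq_zero (hc : G.Connected) {u v : V} (h : G.dist u v = 0) : u = v :=
  (hc.dist_eq_zero_iff).mp h

/-- Extract the three distance equations from modularity. -/
lemma med (hm : Modular G) (x y z : V) :
    ∃ m : V, G.dist x m + G.dist m y = G.dist x y ∧
      G.dist y m + G.dist m z = G.dist y z ∧
      G.dist x m + G.dist m z = G.dist x z := by
  obtain ⟨m, h1, h2, h3⟩ := hm x y z
  exact ⟨m, h1, h2, h3⟩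

/-- Parity lemma: for an edge `uv`, no vertex is equidistant from `u` and `v`. -/
lemma parity (hc : G.Connected) (hm : Modular G) {u v : V} (h : G.Adj u v) (w : V) :
    G.dist w u ≠ G.dist w v := by
  intro heq
  obtain ⟨m, h1, h2, h3⟩ := med hm u v w
  rw [adj_dist h] at h1
  have hle1 : G.dist u m ≤ 1 := by omega
  have c1 : G.dist w u = G.dist u w := dcomm _ _
  have c2 : G.dist w v = G.dist v w := dcomm _ _
  rcases Nat.le_one_iff_eq_zero_or_eq_one.mp hle1 with h0 | _
  · have hmu : u = m := dist_eq_zero hc h0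
    rw [← hmu] at h2
    have e1 : G.dist v u = 1 := adj_dist h.symm
    omega
  · have h0 : G.dist m v = 0 := by omega
    have hmv : m = v := dist_eq_zero hc h0
    rw [hmv] at h3
    have e1 : G.dist u v = 1 := adj_dist h
    omega

/-- For an edge `uv`, distances from any `w` differ by exactly one. -/
lemma adj_dist_cases (hc : G.Connected) (hm : Modular G) {u v : V} (h : G.Adj u v) (w : V) :
    G.dist w v = G.dist w u + 1 ∨ G.dist w u = G.dist w v + 1 := by
  have h1 := parity hc hm h w
  have t1 : G.dist w v ≤ G.dist w u + G.dist u v := hc.dist_triangle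
  have t2 : G.dist w u ≤ G.dist w v + G.dist v u := hc.dist_triangle
  rw [adj_dist h] at t1
  rw [adj_dist h.symm] at t2
  omega

/-- From positive distance, get a neighbor on a geodesic. -/
lemma exists_nbr (hc : G.Connected) {u v : V} {k : ℕ} (h : G.dist u v = k + 1) :
    ∃ w : V, G.Adj u w ∧ G.dist w v = k := by
  obtain ⟨p, hp⟩ := hc.exists_walk_length_eq_dist u v
  rw [h] at hp
  cases p with
  | nil => simp at hp
  | cons hadj p' =>
    rename_i w
    refine ⟨w, hadj, le_antisymm ?_ ?_⟩
    · have := SimpleGraph.dist_le p'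
      simp only [SimpleGraph.Walk.length_cons] at hp
      omega
    · have t : G.dist u v ≤ G.dist u w + G.dist w v := hc.dist_triangle
      rw [adj_dist hadj] at t
      omega

/-- Quadrangle condition in modular graphs. -/
lemma quad (hc : G.Connected) (hm : Modular G) {z u1 u2 w : V} {k : ℕ}
    (h1 : G.Adj z u1) (h2 : G.Adj z u2) (hne : u1 ≠ u2)
    (d1 : G.dist w u1 = k) (d2 : G.dist w u2 = k) (dz : G.dist w z = k + 1) :
    ∃ s : V, G.Adj u1 s ∧ G.Adj u2 s ∧ G.dist w s + 1 = k ∧ s ≠ z := by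
  -- first, dist u1 u2 = 2
  have hd12 : G.dist u1 u2 = 2 := by
    have hp := parity hc hm h2 u1
    rw [adj_dist h1.symm] at hp
    have t : G.dist u1 u2 ≤ G.dist u1 z + G.dist z u2 := hc.dist_triangle
    rw [adj_dist h1.symm, adj_dist h2] at t
    have hne0 : G.dist u1 u2 ≠ 0 := by
      intro h0; exact hne (dist_eq_zero hc h0)
    omega
  obtain ⟨m, e1, e2, e3⟩ := med hm u1 u2 w
  rw [hd12] at e1
  rw [dcomm u2 w] at e2
  rw [dcomm u1 w] at e3
  -- m ≠ u1 and m ≠ u2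
  have hmu1 : G.dist u1 m ≠ 0 := by
    intro h0
    have hm1 : u1 = m := dist_eq_zero hc h0
    rw [← hm1] at e2
    have c1 : G.dist u2 u1 = 2 := by rw [dcomm u2 u1]; exact hd12
    have c2 : G.dist u1 w = G.dist w u1 := dcomm _ _
    omega
  have hmu2 : G.dist m u2 ≠ 0 := by
    intro h0
    have hm2 : m = u2 := dist_eq_zero hc h0
    rw [hm2] at e3
    have c1 : G.dist u2 w = G.dist w u2 := dcomm _ _
    omega
  have hk : 1 ≤ k := by
    by_contra hk0
    have : k = 0 := by omega
    subst this
    have : w = u1 := dist_eq_zero hc d1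
    have : w = u2 := dist_eq_zero hc d2
    subst_vars; exact hne rfl
  have hu1m : G.dist u1 m = 1 := by omega
  have hmu2' : G.dist m u2 = 1 := by omega
  have cwm : G.dist w m = G.dist m w := dcomm _ _
  refine ⟨m, SimpleGraph.dist_eq_one_iff_adj.mp hu1m,
    (SimpleGraph.dist_eq_one_iff_adj.mp hmu2').symm, by omega, ?_⟩
  intro hmz
  rw [hmz] at e3
  have cz : G.dist w z = G.dist z w := dcomm _ _
  omega

end ZeroExtAux

end Aux

section Aux2

set_option linter.unusedSectionVars false
set_option maxHeartbeats 1000000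

open ZeroExtAux

/-- Directed paths of a given length in a modular complex. -/
inductive MCDPath (Γ : ModularComplex V) : V → V → ℕ → Prop
  | refl (x : V) : MCDPath Γ x x 0
  | snoc {x y z : V} {n : ℕ} : MCDPath Γ x y n → Γ.ori y z → MCDPath Γ x z (n + 1)

namespace MCDPath

variable {Γ : ModularComplex V}

lemma cons {x y z : V} {n : ℕ} (h : Γ.ori x y) (hp : MCDPath Γ y z n) :
    MCDPath Γ x z (n + 1) := by
  induction hp with
  | refl => exact MCDPath.snoc (MCDPath.refl x) h
  | snoc hp' ho ih => exact MCDPath.snoc ih ho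

lemma head {x z : V} {n : ℕ} (hp : MCDPath Γ x z (n + 1)) :
    ∃ y : V, Γ.ori x y ∧ MCDPath Γ y z n := by
  induction n generalizing z with
  | zero =>
    cases hp with
    | snoc hp' ho =>
      cases hp' with
      | refl => exact ⟨z, ho, MCDPath.refl z⟩
  | succ n ih =>
    cases hp with
    | snoc hp' ho =>
      obtain ⟨y, h1, h2⟩ := ih hp'
      exact ⟨y, h1, MCDPath.snoc h2 ho⟩

lemma le {x z : V} {n : ℕ} (hp : MCDPath Γ x z n) : Γ.le x z := by
  induction hp with
  | refl => exact Relation.ReflTransGen.refl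
  | snoc hp' ho ih => exact Relation.ReflTransGen.tail ih ho

lemma _root_.ZeroExt.le_mcdpath {x z : V} (h : Γ.le x z) : ∃ n, MCDPath Γ x z n := by
  induction h with
  | refl => exact ⟨0, MCDPath.refl x⟩
  | tail h' ho ih =>
    obtain ⟨n, hp⟩ := ih
    exact ⟨n + 1, MCDPath.snoc hp ho⟩

lemma append {x y z : V} {m n : ℕ} (h1 : MCDPath Γ x y m) (h2 : MCDPath Γ y z n) :
    MCDPath Γ x z (m + n) := by
  induction h2 with
  | refl => exact h1
  | snoc hp' ho ih => exact MCDPath.snoc ih ho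

lemma zero_eq {x z : V} (hp : MCDPath Γ x z 0) : x = z := by
  cases hp; rfl

end MCDPath

namespace ZeroExtAux

open MCDPath

variable {Γ : ModularComplex V}

/-- Orientation transfer along an isometric rectangle.
`(a,b)` and `(d,c)` are parallel edges; sides have length `L`, diagonals `L+1`. -/
lemma rect_transfer : ∀ (L : ℕ) (a b c d : V),
    Γ.G.Adj a b → Γ.G.Adj d c →
    Γ.G.dist b c = L → Γ.G.dist a d = L →
    Γ.G.dist a c = L + 1 → Γ.G.dist b d = L + 1 →
    Γ.ori a b → Γ.ori d c := by
  intro L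
  induction L with
  | zero =>
    intro a b c d _ _ hbc had _ _ hab
    have h1 : a = d := dist_eq_zero Γ.connected had
    have h2 : b = c := dist_eq_zero Γ.connected hbc
    rw [← h1, ← h2]; exact hab
  | succ L ih =>
    intro a b c d hab hdc hbc had hac hbd horient
    -- y : neighbor of d toward a
    have had' : Γ.G.dist d a = L + 1 := by rw [dcomm]; exact had
    obtain ⟨y, hdy, hya⟩ := exists_nbr Γ.connected had'
    -- dist b y = L + 1
    have hby : Γ.G.dist b y = L + 1 := by
      have t1 : Γ.G.dist b y ≤ Γ.G.dist b a + Γ.G.dist a y :=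
        Γ.connected.dist_triangle
      have t2 : Γ.G.dist b d ≤ Γ.G.dist b y + Γ.G.dist y d :=
        Γ.connected.dist_triangle
      have e1 : Γ.G.dist b a = 1 := adj_dist hab.symm
      have e2 : Γ.G.dist a y = Γ.G.dist y a := dcomm _ _
      have e3 : Γ.G.dist y d = 1 := adj_dist hdy.symm
      omega
    -- c ≠ y
    have hcy : c ≠ y := by
      intro h
      rw [← h] at hya
      have e : Γ.G.dist a c = Γ.G.dist c a := dcomm _ _
      omega
    -- QC with apex b, z := d, u1 := c, u2 := y
    obtain ⟨w, hcw, hyw, hbw, hwd⟩ := quad Γ.connected Γ.modular hdc hdy hcy hbc hby hbd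
    -- smaller rectangle (a, b, w, y)
    have haw : Γ.G.dist a w = L + 1 := by
      have t1 : Γ.G.dist a w ≤ Γ.G.dist a y + Γ.G.dist y w :=
        Γ.connected.dist_triangle
      have t2 : Γ.G.dist a c ≤ Γ.G.dist a w + Γ.G.dist w c :=
        Γ.connected.dist_triangle
      have e1 : Γ.G.dist a y = Γ.G.dist y a := dcomm _ _
      have e2 : Γ.G.dist y w = 1 := adj_dist hyw
      have e3 : Γ.G.dist w c = 1 := adj_dist hcw.symm
      omega
    have hay : Γ.G.dist a y = L := by rw [dcomm]; exact hya
    have horient' : Γ.ori y w := ih a b w y hab hyw (by omega) hay haw hby horient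
    -- admissibility on 4-cycle (y, w, c, d)
    have hfc : IsFourCycle Γ.G y w c d := ⟨hyw, hcw.symm, hdc.symm, hdy, hcy.symm, hwd⟩
    exact Γ.admissible hfc horient'

end ZeroExtAux

end Aux2

section Aux3

set_option linter.unusedSectionVars false
set_option maxHeartbeats 1000000

namespace ZeroExtAux

variable {Γ : ModularComplex V}

lemma ori_ne {x y : V} (h : Γ.ori x y) : x ≠ y := (Γ.ori_adj h).ne

lemma ori_dist {x y : V} (h : Γ.ori x y) : Γ.G.dist x y = 1 := adj_dist (Γ.ori_adj h)

/-- Directed paths are geodesics. -/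
lemma mcdpath_dist : ∀ (n : ℕ) (x z : V), MCDPath Γ x z n → Γ.G.dist x z = n := by
  intro n
  induction n using Nat.strong_induction_on with
  | _ n ih =>
    match n with
    | 0 => intro x z hp; rw [hp.zero_eq]; exact SimpleGraph.dist_self
    | n + 1 =>
      intro x z hp
      cases hp with
      | snoc hp' ho =>
        rename_i y
        have hxy : Γ.G.dist x y = n := ih n (by omega) x y hp'
        rcases Nat.eq_zero_or_pos n with hn | hn
        · subst hn
          rw [hp'.zero_eq]
          exact ori_dist ho
        · obtain ⟨n', rfl⟩ : ∃ n', n = n' + 1 := ⟨n - 1, by omega⟩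
          obtain ⟨x1, hx1, hp1⟩ := hp'.head
          have hx1y : Γ.G.dist x1 y = n' := ih n' (by omega) x1 y hp1
          have hx1z : Γ.G.dist x1 z = n' + 1 :=
            ih (n' + 1) (by omega) x1 z (MCDPath.snoc hp1 ho)
          have hpar := parity Γ.connected Γ.modular (Γ.ori_adj ho) x
          have ht : Γ.G.dist x z ≤ Γ.G.dist x y + Γ.G.dist y z := Γ.connected.dist_triangle
          have ht2 : Γ.G.dist x y ≤ Γ.G.dist x z + Γ.G.dist z y := Γ.connected.dist_triangle
          have hyz : Γ.G.dist y z = 1 := ori_dist ho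
          have hzy : Γ.G.dist z y = 1 := adj_dist (Γ.ori_adj ho).symm
          rcases (by omega : Γ.G.dist x z = n' ∨ Γ.G.dist x z = n' + 2) with hxz | hxz
          · exfalso
            have := rect_transfer n' x x1 y z (Γ.ori_adj hx1) (Γ.ori_adj ho).symm
              hx1y hxz (by omega) hx1z hx1
            have heq : y = z := Γ.acyclic (Relation.ReflTransGen.single ho)
              (Relation.ReflTransGen.single this)
            exact (ori_ne ho) heq
          · omega

/-- Distances add along the order. -/
lemma le_dist {x z : V} (h : Γ.le x z) : ∃ n, MCDPath Γ x z n ∧ Γ.G.dist x z = n := by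
  obtain ⟨n, hp⟩ := le_mcdpath h
  exact ⟨n, hp, mcdpath_dist n x z hp⟩

lemma le_dist_add {x y z : V} (h1 : Γ.le x y) (h2 : Γ.le y z) :
    Γ.G.dist x y + Γ.G.dist y z = Γ.G.dist x z := by
  obtain ⟨m, hp1, hd1⟩ := le_dist h1
  obtain ⟨n, hp2, hd2⟩ := le_dist h2
  have := mcdpath_dist (m + n) x z (hp1.append hp2)
  omega

lemma le_antisymm' {x y : V} (h1 : Γ.le x y) (h2 : Γ.le y x) : x = y := Γ.acyclic h1 h2

lemma ori_of_le_dist1 {x z : V} (h : Γ.le x z) (hd : Γ.G.dist x z = 1) : Γ.ori x z := by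
  obtain ⟨n, hp, hdist⟩ := le_dist h
  rw [hd] at hdist
  subst hdist
  cases hp with
  | snoc hp' ho => rw [← hp'.zero_eq] at ho; exact ho

lemma step_dist {x y z : V} (h : Γ.ori x y) (h2 : Γ.le y z) :
    Γ.G.dist x z = Γ.G.dist y z + 1 := by
  obtain ⟨n, hp, hd⟩ := le_dist h2
  have := mcdpath_dist (n + 1) x z (MCDPath.cons h hp)
  omega

/-- Claim I : if `p ⪯ q` then every vertex of `I(p,q)` is `⪯ q`. -/
lemma interval_le : ∀ (n : ℕ) (p q z : V), Γ.le p q → Γ.G.dist p q = n →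
    z ∈ interval Γ.G p q → Γ.le z q := by
  intro n
  induction n using Nat.strong_induction_on with
  | _ n ih =>
    intro p q z hle hn hz
    simp only [interval, Set.mem_setOf_eq] at hz
    rcases Nat.eq_zero_or_pos (Γ.G.dist p z) with hpz | hpz
    · have : p = z := dist_eq_zero Γ.connected hpz
      rw [← this]; exact hle
    rcases Nat.eq_zero_or_pos n with hn0 | hn0
    · omega
    -- decompose le p q
    have hpq : p ≠ q := by
      intro h; rw [h] at hn; rw [SimpleGraph.dist_self] at hn; omega
    obtain ⟨x1, hx1, hx1q⟩ := (Relation.ReflTransGen.cases_head hle).resolve_left hpq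
    have hx1qd : Γ.G.dist x1 q + 1 = n := by
      have := step_dist hx1 hx1q
      omega
    -- parity for edge (p, x1) at z
    have hpar := parity Γ.connected Γ.modular (Γ.ori_adj hx1) z
    have ht : Γ.G.dist z x1 ≤ Γ.G.dist z p + Γ.G.dist p x1 := Γ.connected.dist_triangle
    have ht2 : Γ.G.dist z p ≤ Γ.G.dist z x1 + Γ.G.dist x1 p := Γ.connected.dist_triangle
    have e1 : Γ.G.dist p x1 = 1 := ori_dist hx1
    have e2 : Γ.G.dist x1 p = 1 := adj_dist (Γ.ori_adj hx1).symm
    have c1 : Γ.G.dist z p = Γ.G.dist p z := dcomm _ _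
    have c2 : Γ.G.dist z x1 = Γ.G.dist x1 z := dcomm _ _
    rcases (by omega : Γ.G.dist x1 z + 1 = Γ.G.dist p z ∨
        Γ.G.dist x1 z = Γ.G.dist p z + 1) with hcase | hcase
    · -- z ∈ I(x1, q)
      refine ih (n-1) (by omega) x1 q z hx1q (by omega) ?_
      simp only [interval, Set.mem_setOf_eq]
      have t3 : Γ.G.dist x1 q ≤ Γ.G.dist x1 z + Γ.G.dist z q := Γ.connected.dist_triangle
      have t4 : Γ.G.dist p q ≤ Γ.G.dist p x1 + Γ.G.dist x1 q := Γ.connected.dist_triangle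
      omega
    · -- median m of (x1, z, q)
      obtain ⟨m, e1', e2', e3'⟩ := med Γ.modular x1 z q
      rw [hcase] at e1'
      have czm' : Γ.G.dist z m = Γ.G.dist m z := dcomm _ _
      -- solve: d(x1,m) = d(p,z), d(m,z) = 1, d(m,q) = d(z,q) - 1
      have hx1m : Γ.G.dist x1 m = Γ.G.dist p z := by omega
      have hmz : Γ.G.dist m z = 1 := by omega
      have hmq : Γ.G.dist m q + 1 = Γ.G.dist z q := by omega
      -- d(p,m) = d(p,z) + 1 (parity + triangle vs m∈I(p,q) violation)
      have hpar2 := parity Γ.connected Γ.modular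
        (SimpleGraph.dist_eq_one_iff_adj.mp hmz).symm p
      have tt1 : Γ.G.dist p m ≤ Γ.G.dist p z + Γ.G.dist z m := Γ.connected.dist_triangle
      have tt2 : Γ.G.dist p z ≤ Γ.G.dist p m + Γ.G.dist m z := Γ.connected.dist_triangle
      have tt3 : Γ.G.dist p q ≤ Γ.G.dist p m + Γ.G.dist m q := Γ.connected.dist_triangle
      have czm : Γ.G.dist z m = Γ.G.dist m z := dcomm _ _
      have hpm : Γ.G.dist p m = Γ.G.dist p z + 1 := by omega
      -- rectangle (p, x1, m, z) : ori p x1 ⇒ ori z m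
      have hzm : Γ.ori z m := by
        refine rect_transfer (Γ.G.dist p z) p x1 m z (Γ.ori_adj hx1)
          (SimpleGraph.dist_eq_one_iff_adj.mp hmz).symm hx1m rfl hpm (by omega) hx1
      -- m ∈ I(x1, q), recurse
      have hmle : Γ.le m q := by
        refine ih (n-1) (by omega) x1 q m hx1q (by omega) ?_
        simp only [interval, Set.mem_setOf_eq]
        omega
      exact Relation.ReflTransGen.head hzm hmle

end ZeroExtAux

end Aux3

section Aux4

set_option linter.unusedSectionVars false
set_option maxHeartbeats 1000000

namespace ZeroExtAux

lemma mem_interval {G : SimpleGraph V} {x y z : V} :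
    z ∈ interval G x y ↔ G.dist x z + G.dist z y = G.dist x y := Iff.rfl

/-- The reversed modular complex. -/
def mcRev (Γ : ModularComplex V) : ModularComplex V where
  G := Γ.G
  connected := Γ.connected
  modular := Γ.modular
  ori x y := Γ.ori y x
  ori_adj h := (Γ.ori_adj h).symm
  ori_total := by
    intro x y h
    show Γ.ori y x ∨ Γ.ori x y
    exact Γ.ori_total h.symm
  acyclic h1 h2 := by
    have g1 : Γ.le _ _ := Relation.reflTransGen_swap.mp h1
    have g2 : Γ.le _ _ := Relation.reflTransGen_swap.mp h2
    exact Γ.acyclic g2 g1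
  admissible hfc h := by
    obtain ⟨a1, a2, a3, a4, n1, n2⟩ := hfc
    exact Γ.admissible ⟨a1.symm, a4.symm, a3.symm, a2.symm, n2, n1⟩ h

variable {Γ : ModularComplex V}

lemma mcRev_le {x y : V} : (mcRev Γ).le x y ↔ Γ.le y x := Relation.reflTransGen_swap

lemma mcRev_isJoin {a b j : V} : (mcRev Γ).IsJoin a b j ↔ Γ.IsMeet a b j := by
  constructor
  · rintro ⟨h1, h2, h3⟩
    exact ⟨mcRev_le.mp h1, mcRev_le.mp h2,
      fun x hx1 hx2 => mcRev_le.mp (h3 x (mcRev_le.mpr hx1) (mcRev_le.mpr hx2))⟩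
  · rintro ⟨h1, h2, h3⟩
    exact ⟨mcRev_le.mpr h1, mcRev_le.mpr h2,
      fun x hx1 hx2 => mcRev_le.mpr (h3 x (mcRev_le.mp hx1) (mcRev_le.mp hx2))⟩

lemma mcRev_isMeet {a b j : V} : (mcRev Γ).IsMeet a b j ↔ Γ.IsJoin a b j := by
  constructor
  · rintro ⟨h1, h2, h3⟩
    exact ⟨mcRev_le.mp h1, mcRev_le.mp h2,
      fun x hx1 hx2 => mcRev_le.mp (h3 x (mcRev_le.mpr hx1) (mcRev_le.mpr hx2))⟩
  · rintro ⟨h1, h2, h3⟩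
    exact ⟨mcRev_le.mpr h1, mcRev_le.mpr h2,
      fun x hx1 hx2 => mcRev_le.mpr (h3 x (mcRev_le.mp hx1) (mcRev_le.mp hx2))⟩

/-- The dual of `interval_le`. -/
lemma interval_le' {p q z : V} (hle : Γ.le p q) (hz : z ∈ interval Γ.G p q) :
    Γ.le p z := by
  have hz' : z ∈ interval (mcRev Γ).G q p := by
    rw [mem_interval] at hz ⊢
    have c1 : Γ.G.dist q z = Γ.G.dist z q := dcomm _ _
    have c2 : Γ.G.dist z p = Γ.G.dist p z := dcomm _ _
    have c3 : Γ.G.dist q p = Γ.G.dist p q := dcomm _ _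
    show Γ.G.dist q z + Γ.G.dist z p = Γ.G.dist q p
    omega
  have := interval_le (Γ := mcRev Γ) ((mcRev Γ).G.dist q p) q p z
    (mcRev_le.mpr hle) rfl hz'
  exact mcRev_le.mp this

/-- A common upper cover of two distinct elements is their join. -/
lemma cover_join {g1 g2 w : V} (hne : g1 ≠ g2) (h1 : Γ.ori g1 w) (h2 : Γ.ori g2 w) :
    Γ.IsJoin g1 g2 w := by
  refine ⟨Relation.ReflTransGen.single h1, Relation.ReflTransGen.single h2, ?_⟩
  intro x hx1 hx2
  have e1 : Γ.G.dist g1 w = 1 := ori_dist h1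
  have e2 : Γ.G.dist g2 w = 1 := ori_dist h2
  have p1 := parity Γ.connected Γ.modular (Γ.ori_adj h1) x
  have p2 := parity Γ.connected Γ.modular (Γ.ori_adj h2) x
  have t1 : Γ.G.dist x w ≤ Γ.G.dist x g1 + Γ.G.dist g1 w := Γ.connected.dist_triangle
  have t2 : Γ.G.dist x g1 ≤ Γ.G.dist x w + Γ.G.dist w g1 := Γ.connected.dist_triangle
  have t3 : Γ.G.dist x w ≤ Γ.G.dist x g2 + Γ.G.dist g2 w := Γ.connected.dist_triangle
  have t4 : Γ.G.dist x g2 ≤ Γ.G.dist x w + Γ.G.dist w g2 := Γ.connected.dist_triangle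
  have cw1 : Γ.G.dist w g1 = Γ.G.dist g1 w := dcomm _ _
  have cw2 : Γ.G.dist w g2 = Γ.G.dist g2 w := dcomm _ _
  rcases (by omega : Γ.G.dist x w + 1 = Γ.G.dist x g1 ∨ Γ.G.dist x w + 1 = Γ.G.dist x g2 ∨
      (Γ.G.dist x g1 + 1 = Γ.G.dist x w ∧ Γ.G.dist x g2 + 1 = Γ.G.dist x w)) with hA | hB | hC
  · -- w ∈ I(g1, x)
    refine interval_le (Γ.G.dist g1 x) g1 x w hx1 rfl ?_
    rw [mem_interval]
    have c1 : Γ.G.dist g1 x = Γ.G.dist x g1 := dcomm _ _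
    have c2 : Γ.G.dist w x = Γ.G.dist x w := dcomm _ _
    omega
  · refine interval_le (Γ.G.dist g2 x) g2 x w hx2 rfl ?_
    rw [mem_interval]
    have c1 : Γ.G.dist g2 x = Γ.G.dist x g2 := dcomm _ _
    have c2 : Γ.G.dist w x = Γ.G.dist x w := dcomm _ _
    omega
  · -- both below : contradiction via QC
    exfalso
    obtain ⟨hC1, hC2⟩ := hC
    have hd : Γ.G.dist x g1 = Γ.G.dist x g2 := by omega
    have hxg1 : Γ.G.dist x g1 ≠ 0 := by
      intro h0
      have hx1' : x = g1 := dist_eq_zero Γ.connected h0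
      have h0' : Γ.G.dist x g2 = 0 := by omega
      have hx2' : x = g2 := dist_eq_zero Γ.connected h0'
      exact hne (hx1'.symm.trans hx2' ▸ rfl)
    obtain ⟨s, hs1, hs2, hs3, hs4⟩ := quad (w := x) (k := Γ.G.dist x g1) Γ.connected Γ.modular
      (Γ.ori_adj h1).symm (Γ.ori_adj h2).symm hne rfl (by omega) (by omega)
    have hfc : IsFourCycle Γ.G g1 w g2 s :=
      ⟨Γ.ori_adj h1, (Γ.ori_adj h2).symm, hs2, hs1.symm, hne, hs4.symm⟩
    have hsg2 : Γ.ori s g2 := Γ.admissible hfc h1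
    have hadd := le_dist_add (Relation.ReflTransGen.single hsg2) hx2
    have e3 : Γ.G.dist s g2 = 1 := ori_dist hsg2
    have c1 : Γ.G.dist g2 x = Γ.G.dist x g2 := dcomm _ _
    have c2 : Γ.G.dist s x = Γ.G.dist x s := dcomm _ _
    omega

end ZeroExtAux

end Aux4

section Aux5

set_option linter.unusedSectionVars false
set_option maxHeartbeats 1000000

namespace ZeroExtAux

variable {G : SimpleGraph V} {A' : Set V}

lemma gate_unique (hc : G.Connected) {x g g' : V}
    (h : IsGate G A' x g) (h' : IsGate G A' x g') : g = g' := by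
  have e1 := h.2 g' h'.1
  have e2 := h'.2 g h.1
  have c1 : G.dist g g' = G.dist g' g := dcomm _ _
  have h0 : G.dist g g' = 0 := by omega
  exact dist_eq_zero hc h0

lemma gate_self {x : V} (hx : x ∈ A') : IsGate G A' x x := by
  refine ⟨hx, fun u hu => ?_⟩
  rw [SimpleGraph.dist_self]
  omega

lemma gate_exists (hc : G.Connected) (hm : Modular G) (hconv : Convex G A')
    (hne : A'.Nonempty) (x : V) : ∃ g, IsGate G A' x g := by
  obtain ⟨g, hgA, hmin⟩ := Set.exists_min_image A' (fun u => G.dist x u) A'.toFinite hne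
  refine ⟨g, hgA, fun u hu => ?_⟩
  obtain ⟨m, e1, e2, e3⟩ := med hm x g u
  have hmA : m ∈ A' := by
    refine hconv g hgA u hu ?_
    rw [mem_interval]
    exact e2
  have hminm := hmin m hmA
  have h0 : G.dist m g = 0 := by omega
  have hmg : m = g := dist_eq_zero hc h0
  rw [hmg] at e3
  omega

lemma gate_intermediate (hc : G.Connected) {x g c : V}
    (hg : IsGate G A' x g) (hmem : c ∈ interval G x g) : IsGate G A' c g := by
  rw [mem_interval] at hmem
  refine ⟨hg.1, fun u hu => ?_⟩
  have e1 := hg.2 u hu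
  have t1 : G.dist c u ≤ G.dist c g + G.dist g u := hc.dist_triangle
  have t2 : G.dist x u ≤ G.dist x c + G.dist c u := hc.dist_triangle
  omega

lemma gate_dist_le (hc : G.Connected) {u v gu gv : V} (huv : G.Adj u v)
    (hgu : IsGate G A' u gu) (hgv : IsGate G A' v gv) : G.dist gu gv ≤ 1 := by
  have e1 := hgu.2 gv hgv.1
  have e2 := hgv.2 gu hgu.1
  have t1 : G.dist u gv ≤ G.dist u v + G.dist v gv := hc.dist_triangle
  have t2 : G.dist v gu ≤ G.dist v u + G.dist u gu := hc.dist_triangle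
  have a1 : G.dist u v = 1 := adj_dist huv
  have a2 : G.dist v u = 1 := adj_dist huv.symm
  have c1 : G.dist gv gu = G.dist gu gv := dcomm _ _
  omega

lemma edge_gate (hc : G.Connected) {u v gu gv : V} (huv : G.Adj u v)
    (hgu : IsGate G A' u gu) (hgv : IsGate G A' v gv) (hne : gu ≠ gv) :
    G.dist gu gv = 1 ∧ G.dist u gu = G.dist v gv := by
  have e1 := hgu.2 gv hgv.1
  have e2 := hgv.2 gu hgu.1
  have t1 : G.dist u gv ≤ G.dist u v + G.dist v gv := hc.dist_triangle
  have t2 : G.dist v gu ≤ G.dist v u + G.dist u gu := hc.dist_triangle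
  have a1 : G.dist u v = 1 := adj_dist huv
  have a2 : G.dist v u = 1 := adj_dist huv.symm
  have c1 : G.dist gv gu = G.dist gu gv := dcomm _ _
  have hpos : G.dist gu gv ≠ 0 := fun h0 => hne (dist_eq_zero hc h0)
  omega

lemma gate_chain {Γ : ModularComplex V} (hconv : Convex Γ.G A') {x z gx gz : V} {ℓ : ℕ}
    (hp : MCDPath Γ x z ℓ) (hgx : IsGate Γ.G A' x gx) (hgz : IsGate Γ.G A' z gz) :
    Γ.G.dist gx gz ≤ ℓ := by
  induction hp generalizing gz with
  | refl => rw [gate_unique Γ.connected hgx hgz]; rw [SimpleGraph.dist_self]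
  | snoc hp' ho ih =>
    rename_i y z n
    obtain ⟨gy, hgy⟩ := gate_exists Γ.connected Γ.modular hconv ⟨gx, hgx.1⟩ y
    have h1 := ih hgy
    have h2 := gate_dist_le Γ.connected (Γ.ori_adj ho) hgy hgz
    have t : Γ.G.dist gx gz ≤ Γ.G.dist gx gy + Γ.G.dist gy gz := Γ.connected.dist_triangle
    omega

end ZeroExtAux

end Aux5

section Aux6

set_option linter.unusedSectionVars false
set_option maxHeartbeats 1000000

namespace ZeroExtAux

/-- Reversal of an extended modular complex. -/
def emcRev (Γ : ExtendedModularComplex V) : ExtendedModularComplex V where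
  toModularComplex := mcRev Γ.toModularComplex
  sq p q := Γ.sq q p
  sq_le h := mcRev_le.mpr (Γ.sq_le h)
  sq_refl p := Γ.sq_refl p
  sq_edge h := Γ.sq_edge h
  sq_interval := by
    intro p q a b hpq hab ha hb
    exact Γ.sq_interval hpq (mcRev_le.mp hab) ⟨mcRev_le.mp hb.2, mcRev_le.mp hb.1⟩
      ⟨mcRev_le.mp ha.2, mcRev_le.mp ha.1⟩
  sq_join := by
    intro p q1 q2 j h1 h2 hj
    exact Γ.sq_meet h1 h2 (mcRev_isJoin.mp hj)
  sq_meet := by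
    intro p1 p2 q m h1 h2 hm
    exact Γ.sq_join h1 h2 (mcRev_isMeet.mp hm)

variable {Γ : ExtendedModularComplex V} {A' : Set V}

/-- The ladder construction: translate a strict gate configuration one step towards `A'`. -/
lemma ladder (hconv : Convex Γ.G A') {p q q' : V} {r : ℕ}
    (hq' : IsGate Γ.G A' q q') (hsq : Γ.sq p q) :
    ∀ (ℓ : ℕ) (x m y : V),
      MCDPath Γ.toModularComplex x q ℓ →
      Γ.le p x →
      IsGate Γ.G A' x y →
      Γ.G.dist x y = r →
      Γ.G.dist y q' = ℓ →
      Γ.G.Adj x m →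
      Γ.toModularComplex.ori x m →
      Γ.G.dist x m + Γ.G.dist m y = Γ.G.dist x y →
      Γ.sq p m →
      ∃ q1 : V, Γ.sq p q1 ∧ MCDPath Γ.toModularComplex m q1 ℓ ∧
        IsGate Γ.G A' q1 q' ∧ Γ.G.dist q1 q' + 1 = r := by
  intro ℓ
  induction ℓ with
  | zero =>
    intro x m y hpath hlepx hgx hdxy hyq' hadj hori hint hsqm
    have hxq : x = q := hpath.zero_eq
    subst hxq
    have hyq : y = q' := gate_unique Γ.connected hgx hq'
    subst hyq
    have hxm : Γ.G.dist x m = 1 := adj_dist hadj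
    refine ⟨m, hsqm, MCDPath.refl m, gate_intermediate Γ.connected hgx ?_, by omega⟩
    rw [mem_interval]
    exact hint
  | succ ℓ ih =>
    intro x m y hpath hlepx hgx hdxy hyq' hadj hori hint hsqm
    obtain ⟨x2, hox2, hpath2⟩ := hpath.head
    have hneA : A'.Nonempty := ⟨q', hq'.1⟩
    obtain ⟨y2, hgy2⟩ := gate_exists Γ.connected Γ.modular hconv hneA x2
    have hchain : Γ.G.dist y2 q' ≤ ℓ := gate_chain hconv hpath2 hgy2 hq'
    have hyy2le : Γ.G.dist y y2 ≤ 1 := gate_dist_le Γ.connected (Γ.ori_adj hox2) hgx hgy2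
    have htri : Γ.G.dist y q' ≤ Γ.G.dist y y2 + Γ.G.dist y2 q' := Γ.connected.dist_triangle
    have hyne : y ≠ y2 := by
      intro h
      rw [← h] at hchain
      omega
    obtain ⟨hyy2, hreq⟩ := edge_gate Γ.connected (Γ.ori_adj hox2) hgx hgy2 hyne
    have hy2q' : Γ.G.dist y2 q' = ℓ := by omega
    have hx2y2 : Γ.G.dist x2 y2 = r := by omega
    have hxm : Γ.G.dist x m = 1 := adj_dist hadj
    have hgm : IsGate Γ.G A' m y := gate_intermediate Γ.connected hgx hint
    have hmy : Γ.G.dist m y + 1 = r := by omega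
    have hmy2 : Γ.G.dist m y2 = r := by
      have := hgm.2 y2 hgy2.1
      omega
    have hx2y : Γ.G.dist x2 y = r + 1 := by
      have := hgy2.2 y hgx.1
      have c1 : Γ.G.dist y2 y = Γ.G.dist y y2 := dcomm _ _
      omega
    have hmx2 : m ≠ x2 := by
      intro h
      rw [h] at hmy
      omega
    have hpar := parity Γ.connected Γ.modular (Γ.ori_adj hox2) m
    have hmx2d : Γ.G.dist m x2 = 2 := by
      have t : Γ.G.dist m x2 ≤ Γ.G.dist m x + Γ.G.dist x x2 := Γ.connected.dist_triangle
      have c1 : Γ.G.dist m x = Γ.G.dist x m := dcomm _ _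
      have a1 : Γ.G.dist x x2 = 1 := ori_dist hox2
      have ne0 : Γ.G.dist m x2 ≠ 0 := fun h0 => hmx2 (dist_eq_zero Γ.connected h0)
      omega
    obtain ⟨M, e1, e2, e3⟩ := med Γ.modular m x2 y2
    have cMx2 : Γ.G.dist x2 M = Γ.G.dist M x2 := dcomm _ _
    have hmM : Γ.G.dist m M = 1 := by omega
    have hMx2 : Γ.G.dist M x2 = 1 := by omega
    have hMy2 : Γ.G.dist M y2 + 1 = r := by omega
    have hadjmM : Γ.G.Adj m M := SimpleGraph.dist_eq_one_iff_adj.mp hmM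
    have hadjMx2 : Γ.G.Adj M x2 := SimpleGraph.dist_eq_one_iff_adj.mp hMx2
    have hxy2 : Γ.G.dist x y2 = r + 1 := by
      have := hgx.2 y2 hgy2.1
      omega
    have hxM : x ≠ M := by
      intro h
      rw [← h] at hMy2
      omega
    have homM : Γ.toModularComplex.ori m M :=
      Γ.admissible ⟨Γ.ori_adj hox2, hadjMx2.symm, hadjmM.symm, hadj.symm, hxM, Ne.symm hmx2⟩
        hox2
    have hox2M : Γ.toModularComplex.ori x2 M :=
      Γ.admissible ⟨hadj, hadjmM, hadjMx2, (Γ.ori_adj hox2).symm, hxM, hmx2⟩ hori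
    have hjoin : Γ.toModularComplex.IsJoin x2 m M :=
      cover_join (fun h => hmx2 h.symm) hox2M homM
    have hlepx2 : Γ.le p x2 := hlepx.tail hox2
    have hsqpx2 : Γ.sq p x2 :=
      Γ.sq_interval hsq hlepx2 ⟨Relation.ReflTransGen.refl, Γ.sq_le hsq⟩ ⟨hlepx2, hpath2.le⟩
    have hsqpM : Γ.sq p M := Γ.sq_join hsqpx2 hsqm hjoin
    obtain ⟨q1, h1, h2, h3, h4⟩ := ih x2 M y2 hpath2 hlepx2 hgy2 hx2y2 hy2q'
      hadjMx2.symm hox2M (by omega) hsqpM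
    exact ⟨q1, h1, MCDPath.cons homM h2, h3, h4⟩

/-- One descent step: given a fully strict configuration with a downward
edge at `p`, produce a translated pair one step closer to `A'`. -/
lemma descend (hconv : Convex Γ.G A') {p q p' q' c : V} {r n : ℕ}
    (hsq : Γ.sq p q)
    (hp' : IsGate Γ.G A' p p') (hq' : IsGate Γ.G A' q q')
    (hn : Γ.G.dist p q = n) (hrp : Γ.G.dist p p' = r)
    (ht : Γ.G.dist p' q' = n)
    (hadj : Γ.G.Adj p c) (hint : Γ.G.dist p c + Γ.G.dist c p' = Γ.G.dist p p')
    (hc : Γ.toModularComplex.ori p c) :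
    ∃ q1 : V, Γ.sq c q1 ∧ IsGate Γ.G A' q1 q' ∧ Γ.G.dist c q1 = n ∧
      Γ.G.dist q1 q' + 1 = r := by
  have hle : Γ.le p q := Γ.sq_le hsq
  obtain ⟨n0, hpath, hd⟩ := le_dist hle
  have hn0 : n0 = n := by omega
  rw [hn0] at hpath
  obtain ⟨q1, h1, h2, h3, h4⟩ := ladder hconv hq' hsq n p c p' hpath
    Relation.ReflTransGen.refl hp' hrp ht hadj hc hint (Γ.sq_edge hc)
  refine ⟨q1, ?_, h3, mcdpath_dist _ _ _ h2, h4⟩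
  have hlecq1 : Γ.le c q1 := h2.le
  have hlepc : Γ.le p c := Relation.ReflTransGen.single hc
  exact Γ.sq_interval h1 hlecq1 ⟨hlepc, hlecq1⟩ ⟨Γ.sq_le h1, Relation.ReflTransGen.refl⟩

end ZeroExtAux

end Aux6

section Aux7

set_option linter.unusedSectionVars false
set_option maxHeartbeats 4000000

namespace ZeroExtAux

lemma main_aux : ∀ (N : ℕ) (Γ : ExtendedModularComplex V) (A' : Set V) (p q p' q' : V),
    Γ.sq p q → Convex Γ.G A' → IsGate Γ.G A' p p' → IsGate Γ.G A' q q' →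
    Γ.G.dist p q + Γ.G.dist p p' + Γ.G.dist q q' ≤ N →
    Γ.sq p' q' := by
  intro N
  induction N with
  | zero =>
    intro Γ A' p q p' q' hsq hconv hp' hq' hN
    have h1 : p = q := dist_eq_zero Γ.connected (by omega)
    rw [← h1] at hq'
    rw [gate_unique Γ.connected hq' hp']
    exact Γ.sq_refl p'
  | succ N IH =>
    intro Γ A' p q p' q' hsq hconv hp' hq' hN
    have hle : Γ.toModularComplex.le p q := Γ.sq_le hsq
    -- case n = 0
    rcases Nat.eq_zero_or_pos (Γ.G.dist p q) with hn0 | hn0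
    · have h1 : p = q := dist_eq_zero Γ.connected hn0
      rw [← h1] at hq'
      rw [gate_unique Γ.connected hq' hp']
      exact Γ.sq_refl p'
    -- case rp = 0
    rcases Nat.eq_zero_or_pos (Γ.G.dist p p') with hrp0 | hrp0
    · have h1 : p = p' := dist_eq_zero Γ.connected hrp0
      have hpA : p ∈ A' := h1 ▸ hp'.1
      have e := hq'.2 p hpA
      have c1 : Γ.G.dist q p = Γ.G.dist p q := dcomm _ _
      have c2 : Γ.G.dist q' p = Γ.G.dist p q' := dcomm _ _
      have c3 : Γ.G.dist q q' = Γ.G.dist q' q := dcomm _ _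
      have hmem : q' ∈ interval Γ.G p q := by rw [mem_interval]; omega
      have hle1 : Γ.toModularComplex.le p q' := interval_le' hle hmem
      have hle2 : Γ.toModularComplex.le q' q :=
        interval_le (Γ.G.dist p q) p q q' hle rfl hmem
      rw [← h1]
      exact Γ.sq_interval hsq hle1 ⟨Relation.ReflTransGen.refl, hle⟩ ⟨hle1, hle2⟩
    -- case rq = 0
    rcases Nat.eq_zero_or_pos (Γ.G.dist q q') with hrq0 | hrq0
    · have h1 : q = q' := dist_eq_zero Γ.connected hrq0
      have hqA : q ∈ A' := h1 ▸ hq'.1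
      have e := hp'.2 q hqA
      have hmem : p' ∈ interval Γ.G p q := by rw [mem_interval]; omega
      have hle1 : Γ.toModularComplex.le p p' := interval_le' hle hmem
      have hle2 : Γ.toModularComplex.le p' q :=
        interval_le (Γ.G.dist p q) p q p' hle rfl hmem
      rw [← h1]
      exact Γ.sq_interval hsq hle2 ⟨hle1, hle2⟩ ⟨hle, Relation.ReflTransGen.refl⟩
    -- now n ≥ 1, rp ≥ 1, rq ≥ 1
    obtain ⟨n0, hpath, hd⟩ := le_dist hle
    have ht : Γ.G.dist p' q' ≤ Γ.G.dist p q := by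
      have := gate_chain hconv hpath hp' hq'
      omega
    have dqp' : Γ.G.dist q p' = Γ.G.dist q q' + Γ.G.dist q' p' := hq'.2 p' hp'.1
    have dpq' : Γ.G.dist p q' = Γ.G.dist p p' + Γ.G.dist p' q' := hp'.2 q' hq'.1
    have cq'p' : Γ.G.dist q' p' = Γ.G.dist p' q' := dcomm _ _
    by_cases hA : Γ.G.dist q q' + Γ.G.dist p' q' < Γ.G.dist p q + Γ.G.dist p p'
    · -- an atom towards p' keeps the gate
      obtain ⟨m, e1, e2, e3⟩ := med Γ.modular p q p'
      have cqm : Γ.G.dist q m = Γ.G.dist m q := dcomm _ _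
      have hμ : 1 ≤ Γ.G.dist p m := by omega
      obtain ⟨μ', hμ'⟩ : ∃ μ', Γ.G.dist p m = μ' + 1 := ⟨Γ.G.dist p m - 1, by omega⟩
      obtain ⟨a, haadj, ham⟩ := exists_nbr Γ.connected hμ'
      have hpa : Γ.G.dist p a = 1 := adj_dist haadj
      have hta : Γ.G.dist a q ≤ Γ.G.dist a m + Γ.G.dist m q := Γ.connected.dist_triangle
      have htp : Γ.G.dist p q ≤ Γ.G.dist p a + Γ.G.dist a q := Γ.connected.dist_triangle
      have hta2 : Γ.G.dist a p' ≤ Γ.G.dist a m + Γ.G.dist m p' := Γ.connected.dist_triangle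
      have htp2 : Γ.G.dist p p' ≤ Γ.G.dist p a + Γ.G.dist a p' := Γ.connected.dist_triangle
      have hmemq : a ∈ interval Γ.G p q := by rw [mem_interval]; omega
      have hmemp' : a ∈ interval Γ.G p p' := by rw [mem_interval]; omega
      have hga : IsGate Γ.G A' a p' := gate_intermediate Γ.connected hp' hmemp'
      have hlepa : Γ.toModularComplex.le p a := interval_le' hle hmemq
      have hleaq : Γ.toModularComplex.le a q :=
        interval_le (Γ.G.dist p q) p q a hle rfl hmemq
      have hsqaq : Γ.sq a q :=
        Γ.sq_interval hsq hleaq ⟨hlepa, hleaq⟩ ⟨hle, Relation.ReflTransGen.refl⟩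
      refine IH Γ A' a q p' q' hsqaq hconv hga hq' ?_
      have h5 : Γ.G.dist p a + Γ.G.dist a q = Γ.G.dist p q := hmemq
      have h6 : Γ.G.dist p a + Γ.G.dist a p' = Γ.G.dist p p' := hmemp'
      omega
    by_cases hB : Γ.G.dist p p' + Γ.G.dist p' q' < Γ.G.dist p q + Γ.G.dist q q'
    · -- a coatom towards q' keeps the gate
      obtain ⟨m, e1, e2, e3⟩ := med Γ.modular q p q'
      have cpm : Γ.G.dist p m = Γ.G.dist m p := dcomm _ _
      have cqp : Γ.G.dist q p = Γ.G.dist p q := dcomm _ _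
      have hμ : 1 ≤ Γ.G.dist q m := by omega
      obtain ⟨μ', hμ'⟩ : ∃ μ', Γ.G.dist q m = μ' + 1 := ⟨Γ.G.dist q m - 1, by omega⟩
      obtain ⟨b, hbadj, hbm⟩ := exists_nbr Γ.connected hμ'
      have hqb : Γ.G.dist q b = 1 := adj_dist hbadj
      have htb : Γ.G.dist b p ≤ Γ.G.dist b m + Γ.G.dist m p := Γ.connected.dist_triangle
      have htq : Γ.G.dist q p ≤ Γ.G.dist q b + Γ.G.dist b p := Γ.connected.dist_triangle
      have htb2 : Γ.G.dist b q' ≤ Γ.G.dist b m + Γ.G.dist m q' := Γ.connected.dist_triangle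
      have htq2 : Γ.G.dist q q' ≤ Γ.G.dist q b + Γ.G.dist b q' := Γ.connected.dist_triangle
      have cpb : Γ.G.dist p b = Γ.G.dist b p := dcomm _ _
      have cbq : Γ.G.dist b q = Γ.G.dist q b := dcomm _ _
      have hmemq : b ∈ interval Γ.G p q := by rw [mem_interval]; omega
      have hmemq' : b ∈ interval Γ.G q q' := by rw [mem_interval]; omega
      have hgb : IsGate Γ.G A' b q' := gate_intermediate Γ.connected hq' hmemq'
      have hlepb : Γ.toModularComplex.le p b := interval_le' hle hmemq
      have hlebq : Γ.toModularComplex.le b q :=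
        interval_le (Γ.G.dist p q) p q b hle rfl hmemq
      have hsqpb : Γ.sq p b :=
        Γ.sq_interval hsq hlepb ⟨Relation.ReflTransGen.refl, hle⟩ ⟨hlepb, hlebq⟩
      refine IH Γ A' p b p' q' hsqpb hconv hp' hgb ?_
      have h5 : Γ.G.dist p b + Γ.G.dist b q = Γ.G.dist p q := hmemq
      have h6 : Γ.G.dist q b + Γ.G.dist b q' = Γ.G.dist q q' := hmemq'
      omega
    -- fully strict case: t = n, rp = rq
    have htn : Γ.G.dist p' q' = Γ.G.dist p q ∧ Γ.G.dist p p' = Γ.G.dist q q' := by omega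
    obtain ⟨μ', hμ'⟩ : ∃ μ', Γ.G.dist p p' = μ' + 1 := ⟨Γ.G.dist p p' - 1, by omega⟩
    obtain ⟨c, hcadj, hcp'⟩ := exists_nbr Γ.connected hμ'
    have hpc : Γ.G.dist p c = 1 := adj_dist hcadj
    have hcint : Γ.G.dist p c + Γ.G.dist c p' = Γ.G.dist p p' := by omega
    have hgc : IsGate Γ.G A' c p' := gate_intermediate Γ.connected hp'
      (by rw [mem_interval]; exact hcint)
    -- distance from c to q
    have hparc := parity Γ.connected Γ.modular hcadj q
    have htc1 : Γ.G.dist q c ≤ Γ.G.dist q p + Γ.G.dist p c := Γ.connected.dist_triangle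
    have htc2 : Γ.G.dist q p ≤ Γ.G.dist q c + Γ.G.dist c p := Γ.connected.dist_triangle
    have ccp : Γ.G.dist c p = Γ.G.dist p c := dcomm _ _
    have ccq : Γ.G.dist c q = Γ.G.dist q c := dcomm _ _
    have cqp : Γ.G.dist q p = Γ.G.dist p q := dcomm _ _
    by_cases hc : Γ.toModularComplex.ori p c
    · rcases (by omega : Γ.G.dist c q + 1 = Γ.G.dist p q ∨
          Γ.G.dist c q = Γ.G.dist p q + 1) with hnear | hfar
      · -- c is an atom of [p,q] keeping the gate
        have hmemq : c ∈ interval Γ.G p q := by rw [mem_interval]; omega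
        have hlepc : Γ.toModularComplex.le p c := Relation.ReflTransGen.single hc
        have hlecq : Γ.toModularComplex.le c q :=
          interval_le (Γ.G.dist p q) p q c hle rfl hmemq
        have hsqcq : Γ.sq c q :=
          Γ.sq_interval hsq hlecq ⟨hlepc, hlecq⟩ ⟨hle, Relation.ReflTransGen.refl⟩
        refine IH Γ A' c q p' q' hsqcq hconv hgc hq' ?_
        omega
      · -- descend
        obtain ⟨q1, hsqcq1, hgq1, hdcq1, hdq1⟩ := descend hconv hsq hp' hq' rfl rfl
          htn.1 hcadj hcint hc
        refine IH Γ A' c q1 p' q' hsqcq1 hconv hgc hgq1 ?_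
        omega
    · -- upward edge at p; look at the q side
      have hcp : Γ.toModularComplex.ori c p := (Γ.ori_total hcadj).resolve_left hc
      have hfar : Γ.G.dist c q = Γ.G.dist p q + 1 := by
        rcases (by omega : Γ.G.dist c q + 1 = Γ.G.dist p q ∨
            Γ.G.dist c q = Γ.G.dist p q + 1) with hnear | hfar
        · exfalso
          have hmemq : c ∈ interval Γ.G p q := by rw [mem_interval]; omega
          have hlepc : Γ.toModularComplex.le p c := interval_le' hle hmemq
          have heq : c = p := Γ.acyclic (Relation.ReflTransGen.single hcp) hlepc
          exact hcadj.ne heq.symm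
        · exact hfar
      have hcq' : Γ.G.dist c q' = Γ.G.dist c p' + Γ.G.dist p' q' := hgc.2 q' hq'.1
      obtain ⟨e, f1, f2, f3⟩ := med Γ.modular c q q'
      have cqe : Γ.G.dist q e = Γ.G.dist e q := dcomm _ _
      have hqe : Γ.G.dist q e = 1 := by omega
      have hce : Γ.G.dist c e = Γ.G.dist p q := by omega
      have heq' : Γ.G.dist e q' + 1 = Γ.G.dist q q' := by omega
      have hadjqe : Γ.G.Adj q e := SimpleGraph.dist_eq_one_iff_adj.mp hqe
      have hint_e : Γ.G.dist q e + Γ.G.dist e q' = Γ.G.dist q q' := by omega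
      have hge : IsGate Γ.G A' e q' := gate_intermediate Γ.connected hq'
        (by rw [mem_interval]; exact hint_e)
      have hpe : Γ.G.dist p e = Γ.G.dist p q + 1 := by
        have t1 : Γ.G.dist p e ≤ Γ.G.dist p q + Γ.G.dist q e := Γ.connected.dist_triangle
        have t2 : Γ.G.dist p q' ≤ Γ.G.dist p e + Γ.G.dist e q' := Γ.connected.dist_triangle
        omega
      by_cases he : Γ.toModularComplex.ori e q
      · -- descend in the reversed complex
        have cq'q : Γ.G.dist q' q = Γ.G.dist q q' := dcomm _ _
        have cep : Γ.G.dist e p = Γ.G.dist p e := dcomm _ _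
        obtain ⟨p1, hsqep1, hgp1, hdep1, hdp1⟩ := descend (Γ := emcRev Γ) hconv
          (p := q) (q := p) (p' := q') (q' := p') (c := e)
          hsq hq' hp' cqp (rfl : Γ.G.dist q q' = Γ.G.dist q q')
          (show Γ.G.dist q' p' = Γ.G.dist p q by omega) hadjqe hint_e he
        have hsqp1e : Γ.sq p1 e := hsqep1
        have hgp1' : IsGate Γ.G A' p1 p' := hgp1
        have hdep1' : Γ.G.dist e p1 = Γ.G.dist p q := hdep1
        have hdp1' : Γ.G.dist p1 p' + 1 = Γ.G.dist q q' := hdp1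
        have cp1e : Γ.G.dist p1 e = Γ.G.dist e p1 := dcomm _ _
        refine IH Γ A' p1 e p' q' hsqp1e hconv hgp1' hge ?_
        omega
      · -- rectangle contradiction
        exfalso
        have hqe_ori : Γ.toModularComplex.ori q e := (Γ.ori_total hadjqe).resolve_right he
        have horient := rect_transfer (Γ.G.dist p q) c p q e hcadj.symm hadjqe.symm
          rfl hce hfar hpe hcp
        have heq : e = q := Γ.acyclic (Relation.ReflTransGen.single horient)
          (Relation.ReflTransGen.single hqe_ori)
        exact hadjqe.ne heq.symm

end ZeroExtAux

end Aux7

/-- Projection onto a convex set preserves the relation `⊑`. -/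
theorem sq_of_gates (Γ : ExtendedModularComplex V) (p q p' q' : V) (A' : Set V)
    (hpq : Γ.sq p q) (hconv : Convex Γ.G A')
    (hp' : IsGate Γ.G A' p p') (hq' : IsGate Γ.G A' q q') : Γ.sq p' q' := by
  exact ZeroExtAux.main_aux (Γ.G.dist p q + Γ.G.dist p p' + Γ.G.dist q q')
    Γ A' p q p' q' hpq hconv hp' hq' le_rfl

end ZeroExt
end

section
/- Let (Γ,⊑) be an extended modular complex and p a vertex. Then: for any a,b ∈ L^+_p the greatest lower bound a∧b exists and lies in L^+_p, and if a,b ∈ L^+_p have a common upper bound then a∨b exists and lies in L^+_p; the set L^+_p is convex in Γ; and symmetrically, for any a,b ∈ L^-_p the least upper bound a∨b exists and lies in L^-_p, if a,b ∈ L^-_p have a common lower bound then a∧b exists and lies in L^-_p, and L^-_p is convex in Γ. -/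
namespace ZeroExt

variable {V : Type*}

variable [Fintype V]

section Basics

variable (Γ : ModularComplex V)

lemma mc_median (x y z : V) : ∃ m, m ∈ interval Γ.G x y ∧ m ∈ interval Γ.G y z ∧
    m ∈ interval Γ.G x z := Γ.modular x y z

lemma mc_dist_eq_zero {x y : V} (h : Γ.G.dist x y = 0) : x = y :=
  (Γ.connected.dist_eq_zero_iff).mp h

lemma mc_adj_dist_one {x y : V} (h : Γ.G.Adj x y) : Γ.G.dist x y = 1 :=
  SimpleGraph.dist_eq_one_iff_adj.mpr h

lemma mc_tri (x y z : V) : Γ.G.dist x z ≤ Γ.G.dist x y + Γ.G.dist y z :=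
  Γ.connected.dist_triangle

/-- adjacent vertices have different distances to any vertex -/
lemma mc_adj_dist_ne {x y : V} (u : V) (h : Γ.G.Adj x y) :
    Γ.G.dist u x ≠ Γ.G.dist u y := by
  intro heq
  obtain ⟨m, hm1, hm2, hm3⟩ := mc_median Γ u x y
  -- hm2 : m ∈ interval x y, dist = 1
  have hxy : Γ.G.dist x y = 1 := mc_adj_dist_one Γ h
  have h2 : Γ.G.dist x m + Γ.G.dist m y = 1 := by
    have := hm2; simp only [interval, Set.mem_setOf_eq] at this; omega
  rcases Nat.eq_zero_or_pos (Γ.G.dist x m) with h0 | hpos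
  · -- m = x
    have : x = m := mc_dist_eq_zero Γ h0
    subst this
    simp only [interval, Set.mem_setOf_eq] at hm3 hm1
    -- hm3 : dist u x + dist x y = dist u y
    omega
  · have h0 : Γ.G.dist m y = 0 := by omega
    have : m = y := mc_dist_eq_zero Γ h0
    subst this
    simp only [interval, Set.mem_setOf_eq] at hm1 hm3
    rw [SimpleGraph.dist_comm] at hxy
    omega

lemma mc_adj_dist_cases {x y : V} (u : V) (h : Γ.G.Adj x y) :
    Γ.G.dist u y = Γ.G.dist u x + 1 ∨ Γ.G.dist u x = Γ.G.dist u y + 1 := by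
  have h1 : Γ.G.dist u y ≤ Γ.G.dist u x + Γ.G.dist x y := mc_tri Γ u x y
  have h2 : Γ.G.dist u x ≤ Γ.G.dist u y + Γ.G.dist y x := mc_tri Γ u y x
  have h3 := mc_adj_dist_ne Γ u h
  have h4 : Γ.G.dist x y = 1 := mc_adj_dist_one Γ h
  have h5 : Γ.G.dist y x = 1 := mc_adj_dist_one Γ h.symm
  omega

/-- no triangles -/
lemma mc_no_triangle {x y z : V} (h1 : Γ.G.Adj x y) (h2 : Γ.G.Adj x z) (h3 : Γ.G.Adj y z) :
    False :=
  mc_adj_dist_ne Γ x h3 (by rw [mc_adj_dist_one Γ h1, mc_adj_dist_one Γ h2])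

/-- two distinct neighbors of a common vertex are at distance 2 -/
lemma mc_two_nbrs {x w c : V} (h1 : Γ.G.Adj x w) (h2 : Γ.G.Adj x c) (hne : w ≠ c) :
    Γ.G.dist w c = 2 := by
  have hle : Γ.G.dist w c ≤ 2 := by
    have := mc_tri Γ w x c
    rw [SimpleGraph.dist_comm (u := w) (v := x), mc_adj_dist_one Γ h1, mc_adj_dist_one Γ h2] at this
    omega
  have h0 : Γ.G.dist w c ≠ 0 := fun h => hne (mc_dist_eq_zero Γ h)
  have h1' : Γ.G.dist w c ≠ 1 := by
    intro hh
    exact mc_no_triangle Γ h1 h2 (SimpleGraph.dist_eq_one_iff_adj.mp hh)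
  omega

/-- quadrilateral condition -/
lemma mc_quad {u x y : V} (hxy : Γ.G.dist x y = 2) (hk : Γ.G.dist u x = Γ.G.dist u y) :
    ∃ z, Γ.G.Adj x z ∧ Γ.G.Adj z y ∧ Γ.G.dist u z + 1 = Γ.G.dist u x := by
  obtain ⟨m, hm1, hm2, hm3⟩ := mc_median Γ u x y
  simp only [interval, Set.mem_setOf_eq] at hm1 hm2 hm3
  -- hm1 : d u m + d m x = d u x, hm2 : d x m + d m y = d x y, hm3 : d u m + d m y = d u y
  rcases Nat.eq_zero_or_pos (Γ.G.dist x m) with h0 | hpos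
  · exfalso
    have : x = m := mc_dist_eq_zero Γ h0
    subst this
    -- hm3 : d u x + d x y = d u y
    omega
  rcases Nat.eq_zero_or_pos (Γ.G.dist m y) with h0 | hpos2
  · exfalso
    have : m = y := mc_dist_eq_zero Γ h0
    subst this
    have := SimpleGraph.dist_comm (G := Γ.G) (u := x) (v := m)
    omega
  have hxm : Γ.G.dist x m = 1 := by omega
  have hmy : Γ.G.dist m y = 1 := by omega
  have hmx : Γ.G.dist m x = 1 := by rw [SimpleGraph.dist_comm]; exact hxm
  refine ⟨m, SimpleGraph.dist_eq_one_iff_adj.mp hxm, SimpleGraph.dist_eq_one_iff_adj.mp hmy, ?_⟩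
  omega

/-- extraction of a neighbor along a geodesic -/
lemma mc_nbr {x z : V} (h : Γ.G.dist x z ≠ 0) :
    ∃ w, Γ.G.Adj x w ∧ Γ.G.dist w z + 1 = Γ.G.dist x z := by
  obtain ⟨p, hp⟩ := Γ.connected.exists_walk_length_eq_dist x z
  cases p with
  | nil => simp at hp; exact absurd ((Γ.connected.dist_eq_zero_iff).mpr rfl) h
  | cons h' q =>
    rename_i w
    refine ⟨w, h', ?_⟩
    have hq : Γ.G.dist w z ≤ q.length := SimpleGraph.dist_le q
    simp [SimpleGraph.Walk.length_cons] at hp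
    have h2 : Γ.G.dist x z ≤ 1 + Γ.G.dist w z := by
      have := mc_tri Γ x w z
      rw [mc_adj_dist_one Γ h'] at this; omega
    omega

end Basics
section Orient

variable (Γ : ModularComplex V)

lemma mc_ori_ne {x y : V} (h : Γ.ori x y) : x ≠ y := (Γ.ori_adj h).ne

lemma mc_le_refl (x : V) : Γ.le x x := Relation.ReflTransGen.refl

lemma mc_le_trans {x y z : V} (h1 : Γ.le x y) (h2 : Γ.le y z) : Γ.le x z :=
  Relation.ReflTransGen.trans h1 h2

lemma mc_ori_le {x y : V} (h : Γ.ori x y) : Γ.le x y := Relation.ReflTransGen.single h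

lemma mc_le_antisymm {x y : V} (h1 : Γ.le x y) (h2 : Γ.le y x) : x = y :=
  Γ.acyclic h1 h2

/-- admissibility in the second form: on a 4-cycle (a,b,c,d), ori b c implies ori a d. -/
lemma mc_adm' {a b c d : V} (hc : IsFourCycle Γ.G a b c d) (h : Γ.ori b c) : Γ.ori a d := by
  obtain ⟨h1, h2, h3, h4, h5, h6⟩ := hc
  exact Γ.admissible (⟨h2, h3, h4, h1, h6, Ne.symm h5⟩ : IsFourCycle Γ.G b c d a) h

/-- The fundamental rank lemma: if `x ⪯ y` and `w → x` then `d(w,y) = d(x,y) + 1`. -/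
lemma mc_step {x y : V} (hxy : Γ.le x y) : ∀ w : V, Γ.ori w x →
    Γ.G.dist w y = Γ.G.dist x y + 1 := by
  induction hxy using Relation.ReflTransGen.head_induction_on with
  | refl =>
    intro w hw
    have h0 : Γ.G.dist y y = 0 := by
      exact (Γ.connected.dist_eq_zero_iff).mpr rfl
    rw [h0, mc_adj_dist_one Γ (Γ.ori_adj hw)]
  | head hac hcy ih =>
    rename_i x c
    intro w hw
    have hxc : Γ.G.dist x y = Γ.G.dist c y + 1 := ih x hac
    by_contra hne
    have hcases := mc_adj_dist_cases Γ y (Γ.ori_adj hw)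
    rw [SimpleGraph.dist_comm (u := y) (v := x), SimpleGraph.dist_comm (u := y) (v := w)]
      at hcases
    have hwy : Γ.G.dist w y = Γ.G.dist c y := by omega
    have hwc : w ≠ c := by
      rintro rfl
      exact mc_ori_ne Γ hac (mc_le_antisymm Γ (mc_ori_le Γ hac) (mc_ori_le Γ hw))
    have hd2 : Γ.G.dist w c = 2 := mc_two_nbrs Γ (Γ.ori_adj hw).symm (Γ.ori_adj hac) hwc
    have hk : Γ.G.dist y w = Γ.G.dist y c := by
      rw [SimpleGraph.dist_comm (u := y) (v := w), SimpleGraph.dist_comm (u := y) (v := c)]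
      exact hwy
    obtain ⟨z, hz1, hz2, hz3⟩ := mc_quad Γ hd2 hk
    -- z adj to w and c, d(y,z) + 1 = d(y,w)
    have hyz : Γ.G.dist z y + 1 = Γ.G.dist w y := by
      rw [SimpleGraph.dist_comm (u := z) (v := y), SimpleGraph.dist_comm (u := w) (v := y)]
      omega
    have hxz : x ≠ z := by
      intro h; subst h
      omega
    -- 4-cycle (w, x, c, z)
    have hcyc : IsFourCycle Γ.G w x c z :=
      ⟨Γ.ori_adj hw, Γ.ori_adj hac, hz2.symm, hz1.symm, hwc, hxz⟩
    have hzc : Γ.ori z c := Γ.admissible hcyc hw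
    have := ih z hzc
    omega

/-- distances add along chains -/
lemma mc_chain_add {p x q : V} (h1 : Γ.le p x) (h2 : Γ.le x q) :
    Γ.G.dist p x + Γ.G.dist x q = Γ.G.dist p q := by
  induction h1 using Relation.ReflTransGen.head_induction_on with
  | refl =>
    have : Γ.G.dist x x = 0 := (Γ.connected.dist_eq_zero_iff).mpr rfl
    omega
  | head hac hcx ih =>
    rename_i a c
    have h3 : Γ.G.dist a q = Γ.G.dist c q + 1 := mc_step Γ (mc_le_trans Γ hcx h2) a hac
    have h4 : Γ.G.dist a x = Γ.G.dist c x + 1 := mc_step Γ hcx a hac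
    omega

lemma mc_first_step {p q : V} (h : Γ.le p q) (hne : p ≠ q) :
    ∃ c, Γ.ori p c ∧ Γ.le c q ∧ Γ.G.dist c q + 1 = Γ.G.dist p q := by
  rcases (Relation.ReflTransGen.cases_head h) with h' | ⟨c, hpc, hcq⟩
  · exact absurd h' hne
  · exact ⟨c, hpc, hcq, (mc_step Γ hcq p hpc).symm⟩

end Orient
section UpInt

variable (Γ : ModularComplex V)

local notation "dd" => Γ.G.dist

lemma mc_dcomm (x y : V) : Γ.G.dist x y = Γ.G.dist y x := SimpleGraph.dist_comm

lemma mc_dist_self (x : V) : Γ.G.dist x x = 0 := (Γ.connected.dist_eq_zero_iff).mpr rfl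

/-- if `p ⪯ q` and `w` is a neighbor of `p` closer to `q`, then `p → w ⪯ q`. -/
lemma mc_up : ∀ n {p q w : V}, Γ.G.dist p q = n → Γ.le p q → Γ.G.Adj p w →
    Γ.G.dist w q + 1 = Γ.G.dist p q → Γ.ori p w ∧ Γ.le w q := by
  intro n
  induction n using Nat.strong_induction_on with
  | _ n ih =>
  intro p q w hn hle hadj hdist
  have hne : p ≠ q := by
    rintro rfl; rw [mc_dist_self Γ p] at hdist; omega
  obtain ⟨c, hpc, hcq, hcd⟩ := mc_first_step Γ hle hne
  have hpw : Γ.ori p w := by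
    rcases Γ.ori_total hadj with h | h
    · exact h
    · exfalso
      have := mc_step Γ hle w h
      omega
  refine ⟨hpw, ?_⟩
  by_cases hwc : w = c
  · subst hwc; exact hcq
  rcases Nat.eq_zero_or_pos (dd w q) with h0 | hpos
  · rw [mc_dist_eq_zero Γ h0]; exact Relation.ReflTransGen.refl
  have hd2 : dd w c = 2 := mc_two_nbrs Γ hadj (Γ.ori_adj hpc) hwc
  have hk : dd q w = dd q c := by
    rw [mc_dcomm Γ q w, mc_dcomm Γ q c]; omega
  obtain ⟨z, hz1, hz2, hz3⟩ := mc_quad Γ hd2 hk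
  have hz3' : dd z q + 1 = dd w q := by
    rw [mc_dcomm Γ z q, mc_dcomm Γ w q]; exact hz3
  have hxz : p ≠ z := by
    intro h; subst h; omega
  have hwz : Γ.ori w z := by
    refine Γ.admissible (⟨Γ.ori_adj hpc, hz2.symm, hz1.symm, hadj.symm, hxz, ?_⟩ :
      IsFourCycle Γ.G p c z w) hpc
    exact fun h => hwc h.symm
  have hzc : dd z q + 1 = dd c q := by omega
  have hzq : Γ.le z q := by
    have := ih (dd c q) (by omega) rfl hcq hz2.symm hzc
    exact this.2
  exact Relation.ReflTransGen.head hwz hzq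

/-- the metric interval of a comparable pair is contained in the order interval -/
lemma mc_int : ∀ n {p q z : V}, Γ.G.dist p z = n → Γ.le p q →
    Γ.G.dist p z + Γ.G.dist z q = Γ.G.dist p q → Γ.le p z ∧ Γ.le z q := by
  intro n
  induction n using Nat.strong_induction_on with
  | _ n ih =>
  intro p q z hn hle hz
  rcases Nat.eq_zero_or_pos (dd p z) with h0 | hpos
  · have hpz : p = z := mc_dist_eq_zero Γ h0
    subst hpz
    exact ⟨Relation.ReflTransGen.refl, hle⟩
  obtain ⟨w, hadj, hwz⟩ := mc_nbr Γ (by omega : dd p z ≠ 0)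
  have htri1 : dd w q ≤ dd w z + dd z q := mc_tri Γ w z q
  have htri2 : dd p q ≤ dd p w + dd w q := mc_tri Γ p w q
  have hpw1 : dd p w = 1 := mc_adj_dist_one Γ hadj
  have hwq : dd w q + 1 = dd p q := by omega
  obtain ⟨hpw, hwle⟩ := mc_up Γ (dd p q) rfl hle hadj hwq
  have hwz' : dd w z + dd z q = dd w q := by omega
  have := ih (dd w z) (by omega) rfl hwle hwz'
  exact ⟨Relation.ReflTransGen.head hpw this.1, this.2⟩

/-- principal ideals are convex -/
lemma mc_convid : ∀ n {u x y z : V}, Γ.G.dist x y = n → Γ.le x u → Γ.le y u →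
    Γ.G.dist x z + Γ.G.dist z y = Γ.G.dist x y → Γ.le z u := by
  intro n
  induction n using Nat.strong_induction_on with
  | _ n ih =>
  intro u x y z hn hxu hyu hz
  rcases Nat.eq_zero_or_pos (dd x z) with h0 | hpos
  · rw [← mc_dist_eq_zero Γ h0]; exact hxu
  obtain ⟨w, hadj, hwz⟩ := mc_nbr Γ (by omega : dd x z ≠ 0)
  have htri1 : dd w y ≤ dd w z + dd z y := mc_tri Γ w z y
  have htri2 : dd x y ≤ dd x w + dd w y := mc_tri Γ x w y
  have hpw1 : dd x w = 1 := mc_adj_dist_one Γ hadj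
  have hwy : dd w y + 1 = dd x y := by omega
  have hwzy : dd w z + dd z y = dd w y := by omega
  -- main step: w ⪯ u
  have hwu : Γ.le w u := by
    rcases Γ.ori_total hadj with hxw | hwx
    swap
    · exact Relation.ReflTransGen.head hwx hxu
    obtain ⟨m, hm1, hm2, hm3⟩ := mc_median Γ u x y
    simp only [interval, Set.mem_setOf_eq] at hm1 hm2 hm3
    -- hm1 : d u m + d m x = d u x ; hm2 : d x m + d m y = d x y ; hm3 : d u m + d m y = d u y
    have hxm : Γ.le x m ∧ Γ.le m u := by
      refine mc_int Γ (dd x m) rfl hxu ?_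
      rw [mc_dcomm Γ m u, mc_dcomm Γ x m, mc_dcomm Γ x u]; omega
    have hym : Γ.le y m ∧ Γ.le m u := by
      refine mc_int Γ (dd y m) rfl hyu ?_
      rw [mc_dcomm Γ m u, mc_dcomm Γ y m, mc_dcomm Γ y u]; omega
    rcases Nat.eq_zero_or_pos (dd x m) with hxm0 | hxmpos
    · -- m = x, so y ⪯ x and w ∈ I(y,x)
      have hmx : x = m := mc_dist_eq_zero Γ hxm0
      subst hmx
      have hint : Γ.le y w ∧ Γ.le w x := by
        refine mc_int Γ (dd y w) rfl hym.1 ?_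
        rw [mc_dcomm Γ y w, mc_dcomm Γ w x, mc_dcomm Γ y x]; omega
      exact Relation.ReflTransGen.trans hint.2 hxu
    rcases Nat.eq_zero_or_pos (dd m y) with hmy0 | hmypos
    · -- m = y, so x ⪯ y and w ∈ I(x,y)
      have hmy : m = y := mc_dist_eq_zero Γ hmy0
      subst hmy
      have hint : Γ.le x w ∧ Γ.le w m := by
        refine mc_int Γ (dd x w) rfl hxm.1 ?_
        omega
      exact Relation.ReflTransGen.trans hint.2 hyu
    -- the generic case: take first step x → c towards m
    have hxmne : x ≠ m := by
      intro h; subst h; rw [mc_dist_self Γ x] at hxmpos; omega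
    obtain ⟨c, hxc, hcm, hcd⟩ := mc_first_step Γ hxm.1 hxmne
    by_cases hwc : w = c
    · subst hwc
      exact Relation.ReflTransGen.trans hcm hxm.2
    have hxc1 : dd x c = 1 := mc_adj_dist_one Γ (Γ.ori_adj hxc)
    have htric1 : dd c y ≤ dd c m + dd m y := mc_tri Γ c m y
    have htric2 : dd x y ≤ dd x c + dd c y := mc_tri Γ x c y
    have hcy : dd c y + 1 = dd x y := by omega
    have hd2 : dd w c = 2 := mc_two_nbrs Γ hadj (Γ.ori_adj hxc) hwc
    have hk : dd y w = dd y c := by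
      rw [mc_dcomm Γ y w, mc_dcomm Γ y c]; omega
    obtain ⟨z', hz'1, hz'2, hz'3⟩ := mc_quad Γ hd2 hk
    have hyz' : dd z' y + 1 = dd w y := by
      rw [mc_dcomm Γ z' y, mc_dcomm Γ w y]; exact hz'3
    have hxz' : x ≠ z' := by
      intro h; subst h; omega
    have hwz'' : Γ.ori w z' := by
      refine Γ.admissible (⟨Γ.ori_adj hxc, hz'2.symm, hz'1.symm, hadj.symm, hxz', ?_⟩ :
        IsFourCycle Γ.G x c z' w) hxc
      exact fun h => hwc h.symm
    have hcz'1 : dd c z' = 1 := mc_adj_dist_one Γ hz'2.symm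
    have hz'int : dd c z' + dd z' y = dd c y := by omega
    have hz'u : Γ.le z' u :=
      ih (dd c y) (by omega) rfl (Relation.ReflTransGen.trans hcm hxm.2) hyu hz'int
    exact Relation.ReflTransGen.head hwz'' hz'u
  exact ih (dd w y) (by omega) rfl hwu hyu hwzy

end UpInt
section Op

variable (Γ : ModularComplex V)

/-- the opposite modular complex -/
def ModularComplex.op_s6 : ModularComplex V where
  G := Γ.G
  connected := Γ.connected
  modular := Γ.modular
  ori := flip Γ.ori
  ori_adj h := (Γ.ori_adj h).symm
  ori_total h := (Γ.ori_total h).symm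
  acyclic h1 h2 := Γ.acyclic (Relation.ReflTransGen.swap _ _ h2) (Relation.ReflTransGen.swap _ _ h1)
  admissible := by
    intro x1 x2 x3 x4 hc h
    obtain ⟨h1, h2, h3, h4, h5, h6⟩ := hc
    exact Γ.admissible (⟨h1.symm, h4.symm, h3.symm, h2.symm, h6, h5⟩ :
      IsFourCycle Γ.G x2 x1 x4 x3) h

lemma mc_op_le {x y : V} : Γ.op_s6.le x y ↔ Γ.le y x := by
  constructor
  · intro h; exact Relation.ReflTransGen.swap _ _ h
  · intro h; exact Relation.ReflTransGen.swap _ _ h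

lemma mc_op_G : Γ.op_s6.G = Γ.G := rfl

/-- principal filters are convex -/
lemma mc_convfil {u x y z : V} (hx : Γ.le u x) (hy : Γ.le u y)
    (hz : Γ.G.dist x z + Γ.G.dist z y = Γ.G.dist x y) : Γ.le u z := by
  have := mc_convid Γ.op_s6 (Γ.op_s6.G.dist y x) (u := u) (x := y) (y := x) (z := z) rfl
    ((mc_op_le Γ).mpr hy) ((mc_op_le Γ).mpr hx) ?_
  · exact (mc_op_le Γ).mp this
  · show Γ.G.dist y z + Γ.G.dist z x = Γ.G.dist y x
    rw [mc_dcomm Γ y z, mc_dcomm Γ z x, mc_dcomm Γ y x]; omega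

/-- existence of joins for pairs with a common upper bound -/
lemma mc_join {x y u : V} (hx : Γ.le x u) (hy : Γ.le y u) :
    ∃ j : V, Γ.IsJoin x y j := by
  classical
  have hune : (Finset.univ.filter (fun z => Γ.le x z ∧ Γ.le y z)).Nonempty :=
    ⟨u, by simp [hx, hy]⟩
  obtain ⟨j, hjS, hmin⟩ := Finset.exists_min_image _
    (fun z => Γ.G.dist x z + Γ.G.dist y z) hune
  simp only [Finset.mem_filter, Finset.mem_univ, true_and] at hjS
  refine ⟨j, hjS.1, hjS.2, ?_⟩
  intro u' hxu' hyu'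
  obtain ⟨w, hw1, hw2, hw3⟩ := mc_median Γ x j u'
  simp only [interval, Set.mem_setOf_eq] at hw1 hw2 hw3
  -- hw1 : d x w + d w j = d x j ; hw2 : d j w + d w u' = d j u' ; hw3 : d x w + d w u' = d x u'
  obtain ⟨hxw, hwj⟩ := mc_int Γ (Γ.G.dist x w) rfl hjS.1 hw1
  obtain ⟨-, hwu'⟩ := mc_int Γ (Γ.G.dist x w) rfl hxu' hw3
  obtain ⟨w', hw'1, hw'2, hw'3⟩ := mc_median Γ y j u'
  simp only [interval, Set.mem_setOf_eq] at hw'1 hw'2 hw'3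
  obtain ⟨hyw', hw'j⟩ := mc_int Γ (Γ.G.dist y w') rfl hjS.2 hw'1
  obtain ⟨-, hw'u'⟩ := mc_int Γ (Γ.G.dist y w') rfl hyu' hw'3
  -- median t of (w, j, w')
  obtain ⟨t, ht1, ht2, ht3⟩ := mc_median Γ w j w'
  simp only [interval, Set.mem_setOf_eq] at ht1 ht2 ht3
  -- ht1 : d w t + d t j = d w j ; ht2 : d j t + d t w' = d j w' ; ht3 : d w t + d t w' = d w w'
  obtain ⟨hwt, htj⟩ := mc_int Γ (Γ.G.dist w t) rfl hwj ht1
  obtain ⟨hw't, -⟩ := by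
    refine mc_int Γ (Γ.G.dist w' t) rfl hw'j ?_
    rw [mc_dcomm Γ w' t, mc_dcomm Γ w' j, mc_dcomm Γ t j]
    omega
  have htS : Γ.le x t ∧ Γ.le y t :=
    ⟨Relation.ReflTransGen.trans hxw hwt, Relation.ReflTransGen.trans hyw' hw't⟩
  -- minimality forces t = j
  have h1 : Γ.G.dist x t + Γ.G.dist t j = Γ.G.dist x j := mc_chain_add Γ htS.1 htj
  have h2 : Γ.G.dist y t + Γ.G.dist t j = Γ.G.dist y j := mc_chain_add Γ htS.2 htj
  have hminj := hmin t (by simp [htS.1, htS.2])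
  have htj0 : Γ.G.dist t j = 0 := by omega
  have htjeq : t = j := mc_dist_eq_zero Γ htj0
  subst htjeq
  -- now j ∈ I(w, w'), with w ⪯ u', w' ⪯ u'
  exact mc_convid Γ (Γ.G.dist w w') rfl hwu' hw'u' ht3
/-- existence of meets for pairs with a common lower bound -/
lemma mc_meet {x y c : V} (hx : Γ.le c x) (hy : Γ.le c y) :
    ∃ m : V, Γ.IsMeet x y m := by
  classical
  have hune : (Finset.univ.filter (fun z => Γ.le z x ∧ Γ.le z y)).Nonempty :=
    ⟨c, by simp [hx, hy]⟩
  obtain ⟨m, hmS, hmin⟩ := Finset.exists_min_image _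
    (fun z => Γ.G.dist z x + Γ.G.dist z y) hune
  simp only [Finset.mem_filter, Finset.mem_univ, true_and] at hmS
  refine ⟨m, hmS.1, hmS.2, ?_⟩
  intro s hsx hsy
  -- t1 := median (s, x, m) : common upper bound of s, m below x
  obtain ⟨t1, ht11, ht12, ht13⟩ := mc_median Γ s x m
  simp only [interval, Set.mem_setOf_eq] at ht11 ht12 ht13
  -- ht11 : d s t1 + d t1 x = d s x ; ht12 : d x t1 + d t1 m = d x m ; ht13 : d s t1 + d t1 m = d s m
  obtain ⟨hst1, ht1x⟩ := mc_int Γ (Γ.G.dist s t1) rfl hsx ht11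
  obtain ⟨hmt1, -⟩ := by
    refine mc_int Γ (Γ.G.dist m t1) rfl hmS.1 ?_
    rw [mc_dcomm Γ m t1, mc_dcomm Γ m x, mc_dcomm Γ t1 x]; omega
  obtain ⟨t2, ht21, ht22, ht23⟩ := mc_median Γ s y m
  simp only [interval, Set.mem_setOf_eq] at ht21 ht22 ht23
  obtain ⟨hst2, ht2y⟩ := mc_int Γ (Γ.G.dist s t2) rfl hsy ht21
  obtain ⟨hmt2, -⟩ := by
    refine mc_int Γ (Γ.G.dist m t2) rfl hmS.2 ?_
    rw [mc_dcomm Γ m t2, mc_dcomm Γ m y, mc_dcomm Γ t2 y]; omega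
  -- join of m and s exists (common upper bound t1)
  obtain ⟨j, hmj, hsj, hjle⟩ := mc_join Γ hmt1 hst1
  have hjx : Γ.le j x := Relation.ReflTransGen.trans (hjle t1 hmt1 hst1) ht1x
  have hjy : Γ.le j y := Relation.ReflTransGen.trans (hjle t2 hmt2 hst2) ht2y
  -- minimality forces j = m
  have h1 : Γ.G.dist m j + Γ.G.dist j x = Γ.G.dist m x := mc_chain_add Γ hmj hjx
  have h2 : Γ.G.dist m j + Γ.G.dist j y = Γ.G.dist m y := mc_chain_add Γ hmj hjy
  have hminj := hmin j (by simp [hjx, hjy])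
  have hmj0 : Γ.G.dist m j = 0 := by omega
  have : m = j := mc_dist_eq_zero Γ hmj0
  subst this
  exact hsj

end Op
section Ext

open Relation

/-- the opposite extended modular complex -/
def ExtendedModularComplex.op_s6 (Γ : ExtendedModularComplex V) : ExtendedModularComplex V where
  toModularComplex := Γ.toModularComplex.op_s6
  sq := flip Γ.sq
  sq_le h := Relation.ReflTransGen.swap _ _ (Γ.sq_le h)
  sq_refl := Γ.sq_refl
  sq_edge h := Γ.sq_edge h
  sq_interval := by
    intro p q a b h hab ha hb
    exact Γ.sq_interval h (Relation.ReflTransGen.swap _ _ hab)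
      ⟨Relation.ReflTransGen.swap _ _ hb.2, Relation.ReflTransGen.swap _ _ hb.1⟩
      ⟨Relation.ReflTransGen.swap _ _ ha.2, Relation.ReflTransGen.swap _ _ ha.1⟩
  sq_join := by
    intro p q1 q2 j h1 h2 hj
    exact Γ.sq_meet h1 h2 ⟨Relation.ReflTransGen.swap _ _ hj.1, Relation.ReflTransGen.swap _ _ hj.2.1,
      fun x hx1 hx2 => Relation.ReflTransGen.swap _ _
        (hj.2.2 x (Relation.ReflTransGen.swap _ _ hx1) (Relation.ReflTransGen.swap _ _ hx2))⟩
  sq_meet := by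
    intro p1 p2 q m h1 h2 hm
    exact Γ.sq_join h1 h2 ⟨Relation.ReflTransGen.swap _ _ hm.1, Relation.ReflTransGen.swap _ _ hm.2.1,
      fun x hx1 hx2 => Relation.ReflTransGen.swap _ _
        (hm.2.2 x (Relation.ReflTransGen.swap _ _ hx1) (Relation.ReflTransGen.swap _ _ hx2))⟩

variable (Γ : ExtendedModularComplex V)

lemma ext_lpos_meet {p a b : V} (ha : Γ.sq p a) (hb : Γ.sq p b) :
    ∃ m, Γ.IsMeet a b m ∧ Γ.sq p m := by
  obtain ⟨m, hm⟩ := mc_meet Γ.toModularComplex (Γ.sq_le ha) (Γ.sq_le hb)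
  have hpm : Γ.toModularComplex.le p m := hm.2.2 p (Γ.sq_le ha) (Γ.sq_le hb)
  exact ⟨m, hm, Γ.sq_interval ha hpm ⟨Relation.ReflTransGen.refl, Γ.sq_le ha⟩ ⟨hpm, hm.1⟩⟩

lemma ext_lpos_join {p a b u : V} (ha : Γ.sq p a) (hb : Γ.sq p b)
    (hau : Γ.toModularComplex.le a u) (hbu : Γ.toModularComplex.le b u) :
    ∃ j, Γ.IsJoin a b j ∧ Γ.sq p j := by
  obtain ⟨j, hj⟩ := mc_join Γ.toModularComplex hau hbu
  exact ⟨j, hj, Γ.sq_join ha hb hj⟩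

lemma ext_lpos_conv : ∀ n {p x y z : V}, Γ.toModularComplex.G.dist x y = n →
    Γ.sq p x → Γ.sq p y →
    Γ.toModularComplex.G.dist x z + Γ.toModularComplex.G.dist z y =
      Γ.toModularComplex.G.dist x y → Γ.sq p z := by
  set M := Γ.toModularComplex with hM
  intro n
  induction n using Nat.strong_induction_on with
  | _ n ih =>
  intro p x y z hn hx hy hz
  have px : M.le p x := Γ.sq_le hx
  have py : M.le p y := Γ.sq_le hy
  rcases Nat.eq_zero_or_pos (M.G.dist x z) with h0 | hpos
  · rw [← mc_dist_eq_zero M h0]; exact hx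
  obtain ⟨w, hadj, hwz⟩ := mc_nbr M (by omega : M.G.dist x z ≠ 0)
  have htri1 : M.G.dist w y ≤ M.G.dist w z + M.G.dist z y := mc_tri M w z y
  have htri2 : M.G.dist x y ≤ M.G.dist x w + M.G.dist w y := mc_tri M x w y
  have hpw1 : M.G.dist x w = 1 := mc_adj_dist_one M hadj
  have hwy : M.G.dist w y + 1 = M.G.dist x y := by omega
  have hwzy : M.G.dist w z + M.G.dist z y = M.G.dist w y := by omega
  -- main step : p ⊑ w
  have hw : Γ.sq p w := by
    have hpw_le : M.le p w := mc_convfil M px py (by omega)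
    rcases M.ori_total hadj with hxw | hwx
    swap
    · exact Γ.sq_interval hx hpw_le ⟨Relation.ReflTransGen.refl, px⟩
        ⟨hpw_le, mc_ori_le M hwx⟩
    -- case x → w : write w = x ∨ v with v := median(p, w, y)
    obtain ⟨v, hv1, hv2, hv3⟩ := mc_median M p w y
    simp only [interval, Set.mem_setOf_eq] at hv1 hv2 hv3
    obtain ⟨hpv, hvw⟩ := mc_int M (M.G.dist p v) rfl hpw_le hv1
    obtain ⟨-, hvy⟩ := mc_int M (M.G.dist p v) rfl py hv3
    have sqpv : Γ.sq p v := Γ.sq_interval hy hpv ⟨Relation.ReflTransGen.refl, py⟩ ⟨hpv, hvy⟩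
    have hnvx : ¬ M.le v x := by
      intro hvx
      have h1 : M.G.dist v x + M.G.dist x w = M.G.dist v w :=
        mc_chain_add M hvx (mc_ori_le M hxw)
      have h2 : M.G.dist x y ≤ M.G.dist x v + M.G.dist v y := mc_tri M x v y
      have h3 : M.G.dist x v = M.G.dist v x := mc_dcomm M x v
      have h4 : M.G.dist w v = M.G.dist v w := mc_dcomm M w v
      omega
    obtain ⟨j, hxj, hvj, hjle⟩ := mc_join M (mc_ori_le M hxw) hvw
    have hjw : M.le j w := hjle w (mc_ori_le M hxw) hvw
    have hsplit : M.G.dist x j + M.G.dist j w = M.G.dist x w := mc_chain_add M hxj hjw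
    rcases Nat.eq_zero_or_pos (M.G.dist x j) with hxj0 | hxjpos
    · exfalso
      have : x = j := mc_dist_eq_zero M hxj0
      subst this
      exact hnvx hvj
    have hjw0 : M.G.dist j w = 0 := by omega
    have : j = w := mc_dist_eq_zero M hjw0
    subst this
    exact Γ.sq_join hx sqpv ⟨hxj, hvj, hjle⟩
  exact ih (M.G.dist w y) (by omega) rfl hw hy hwzy

end Ext

/-- `L^+_p` and `L^-_p` are modular semilattices convex in `Γ`:
meets/joins exist appropriately and remain in the sets, which are convex. -/
theorem Lpos_Lneg_semilattice_convex (Γ : ExtendedModularComplex V) (p : V) :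
    (∀ a ∈ Γ.Lpos p, ∀ b ∈ Γ.Lpos p, ∃ m : V, Γ.IsMeet a b m ∧ m ∈ Γ.Lpos p) ∧
    (∀ a ∈ Γ.Lpos p, ∀ b ∈ Γ.Lpos p, (∃ u : V, Γ.le a u ∧ Γ.le b u) →
      ∃ j : V, Γ.IsJoin a b j ∧ j ∈ Γ.Lpos p) ∧
    Convex Γ.G (Γ.Lpos p) ∧
    (∀ a ∈ Γ.Lneg p, ∀ b ∈ Γ.Lneg p, ∃ j : V, Γ.IsJoin a b j ∧ j ∈ Γ.Lneg p) ∧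
    (∀ a ∈ Γ.Lneg p, ∀ b ∈ Γ.Lneg p, (∃ u : V, Γ.le u a ∧ Γ.le u b) →
      ∃ m : V, Γ.IsMeet a b m ∧ m ∈ Γ.Lneg p) ∧
    Convex Γ.G (Γ.Lneg p) := by
  refine ⟨?_, ?_, ?_, ?_, ?_, ?_⟩
  · intro a ha b hb
    exact ext_lpos_meet Γ ha hb
  · rintro a ha b hb ⟨u, hau, hbu⟩
    exact ext_lpos_join Γ ha hb hau hbu
  · intro x hx y hy z hz
    exact ext_lpos_conv Γ (Γ.toModularComplex.G.dist x y) rfl hx hy hz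
  · intro a ha b hb
    obtain ⟨m, hm, hsq⟩ := ext_lpos_meet Γ.op_s6 (p := p) (a := a) (b := b) ha hb
    exact ⟨m, ⟨Relation.ReflTransGen.swap _ _ hm.1, Relation.ReflTransGen.swap _ _ hm.2.1,
      fun x h1 h2 => Relation.ReflTransGen.swap _ _
        (hm.2.2 x (Relation.ReflTransGen.swap _ _ h1) (Relation.ReflTransGen.swap _ _ h2))⟩, hsq⟩
  · rintro a ha b hb ⟨u, hua, hub⟩
    obtain ⟨j, hj, hsq⟩ := ext_lpos_join Γ.op_s6 (p := p) (a := a) (b := b) ha hb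
      (Relation.ReflTransGen.swap _ _ hua) (Relation.ReflTransGen.swap _ _ hub)
    exact ⟨j, ⟨Relation.ReflTransGen.swap _ _ hj.1, Relation.ReflTransGen.swap _ _ hj.2.1,
      fun x h1 h2 => Relation.ReflTransGen.swap _ _
        (hj.2.2 x (Relation.ReflTransGen.swap _ _ h1) (Relation.ReflTransGen.swap _ _ h2))⟩, hsq⟩
  · intro x hx y hy z hz
    exact ext_lpos_conv Γ.op_s6 (Γ.op_s6.toModularComplex.G.dist x y) rfl hx hy hz

end ZeroExt
end
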